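/- arXiv:2101.12671 — 5 statements merged into one kernel-verified Lean document; each statement's English description precedes it below -/
import Mathlib

section
/- If a nonnegative random variable C satisfies the submultiplicative tail property P(C ≥ t₁ + t₂) ≤ P(C ≥ t₁)·P(C ≥ t₂) for all t₁, t₂ ≥ 0, and has finite positive mean, then P(C ≥ t) ≤ exp(1 - t/(e·E[C])) for all t ≥ 0. -/
open MeasureTheory Real

/-- If a nonnegative random variable `C` has a submultiplicative survival function
and finite positive mean, then `P(C ≥ t) ≤ exp (1 - t / (e * E C))` for all `t ≥ 0`. -/
theorem submultiplicative_tail_bound {Ω : Type*} [MeasurableSpace Ω]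
    (P : Measure Ω) [IsProbabilityMeasure P] (C : Ω → ℝ)
    (hmeas : Measurable C) (hnonneg : ∀ᵐ ω ∂P, 0 ≤ C ω)
    (hint : Integrable C P) (hpos : 0 < ∫ ω, C ω ∂P)
    (hsub : ∀ t₁ t₂ : ℝ, 0 ≤ t₁ → 0 ≤ t₂ →
      P {ω | t₁ + t₂ ≤ C ω} ≤ P {ω | t₁ ≤ C ω} * P {ω | t₂ ≤ C ω}) :
    ∀ t : ℝ, 0 ≤ t →
      (P {ω | t ≤ C ω}).toReal ≤
        Real.exp (1 - t / (Real.exp 1 * ∫ ω, C ω ∂P)) := by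
  intro t ht
  set E := ∫ ω, C ω ∂P with hE
  set a := Real.exp 1 * E with ha
  have hapos : 0 < a := mul_pos (Real.exp_pos 1) hpos
  -- Markov's inequality at level a
  have hmarkov : (P {ω | a ≤ C ω}).toReal ≤ Real.exp (-1) := by
    have h := mul_meas_ge_le_integral_of_nonneg hnonneg hint a
    have h2 : (P {ω | a ≤ C ω}).toReal ≤ E / a := by
      rw [le_div_iff₀ hapos]
      rw [measureReal_def, ← hE] at h
      linarith [h]
    calc (P {ω | a ≤ C ω}).toReal ≤ E / a := h2
      _ = Real.exp (-1) := by
          rw [Real.exp_neg, ha]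
          field_simp
  -- Iterated submultiplicativity
  have hiter : ∀ n : ℕ, P {ω | (n : ℝ) * a ≤ C ω} ≤ (P {ω | a ≤ C ω}) ^ n := by
    intro n
    induction n with
    | zero => simpa using prob_le_one
    | succ n ih =>
      have key : P {ω | ((n : ℝ) * a + a) ≤ C ω} ≤
          P {ω | (n : ℝ) * a ≤ C ω} * P {ω | a ≤ C ω} :=
        hsub _ _ (by positivity) hapos.le
      have heq : ((n + 1 : ℕ) : ℝ) * a = (n : ℝ) * a + a := by push_cast; ring
      rw [heq, pow_succ]
      exact key.trans (mul_le_mul_left ih _)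
  -- toReal version
  have hiter' : ∀ n : ℕ, (P {ω | (n : ℝ) * a ≤ C ω}).toReal ≤ Real.exp (-1) ^ n := by
    intro n
    have h1 : (P {ω | (n : ℝ) * a ≤ C ω}).toReal ≤ ((P {ω | a ≤ C ω}) ^ n).toReal := by
      apply ENNReal.toReal_mono _ (hiter n)
      exact (ENNReal.pow_ne_top (measure_ne_top P _))
    rw [ENNReal.toReal_pow] at h1
    exact h1.trans (pow_le_pow_left₀ ENNReal.toReal_nonneg hmarkov n)
  set n := ⌊t / a⌋₊ with hn
  have hna : (n : ℝ) * a ≤ t := by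
    rw [← le_div_iff₀ hapos]
    exact Nat.floor_le (div_nonneg ht hapos.le)
  have hmono : (P {ω | t ≤ C ω}).toReal ≤ (P {ω | (n : ℝ) * a ≤ C ω}).toReal := by
    apply ENNReal.toReal_mono (measure_ne_top P _)
    apply measure_mono
    intro ω hω
    exact le_trans hna hω
  have hlt : t / a < n + 1 := Nat.lt_floor_add_one _
  calc (P {ω | t ≤ C ω}).toReal ≤ Real.exp (-1) ^ n := hmono.trans (hiter' n)
    _ = Real.exp ((n : ℝ) * (-1)) := (Real.exp_nat_mul _ n).symm
    _ ≤ Real.exp (1 - t / a) := by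
        apply Real.exp_le_exp.mpr
        nlinarith [hlt]
end

section
/- In the growth model on a compact metric space S (seed rate λ, growth rate v), for any compact x ⊆ S and any point σ ∈ S, the expected cover times started from x and from x ∪ ball(σ,0) satisfy h(x) − h(x ∪ {σ}) ≤ E[C(σ)], where h(x) is the expected time for the growth process started from initial covered set x to cover S, and C(σ) is the time for a fresh growth process (started from the empty set) to cover the point σ. -/
open MeasureTheory ProbabilityTheory Metric Set

noncomputable section

/-- The interarrival increments of the seed arrival times. -/
def interArrival {Ω : Type*} (τ : ℕ → Ω → ℝ) : ℕ → Ω → ℝ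
  | 0 => τ 0
  | (i+1) => fun ω => τ (i+1) ω - τ i ω

/-- Covered region at time `t` for the growth model with growth rate `v`, started from the
initial covered set `x₀` (which also grows at rate `v`). -/
def coveredFrom {S : Type*} [MetricSpace S] {Ω : Type*} (x₀ : Set S) (v : ℝ)
    (τ : ℕ → Ω → ℝ) (σs : ℕ → Ω → S) (ω : Ω) (t : ℝ) : Set S :=
  {p | ∃ q ∈ x₀, dist p q ≤ v * t} ∪
    ⋃ i ∈ {i : ℕ | τ i ω ≤ t}, Metric.closedBall (σs i ω) (v * (t - τ i ω))

/-- Time for the growth process started from `x₀` to cover the whole space. -/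
def coverTimeFrom {S : Type*} [MetricSpace S] {Ω : Type*} (x₀ : Set S) (v : ℝ)
    (τ : ℕ → Ω → ℝ) (σs : ℕ → Ω → S) (ω : Ω) : ℝ :=
  sInf {t : ℝ | 0 ≤ t ∧ coveredFrom x₀ v τ σs ω t = Set.univ}

/-- Time for the growth process started from the empty set to cover the point `s`. -/
def pointCoverTime {S : Type*} [MetricSpace S] {Ω : Type*} (v : ℝ)
    (τ : ℕ → Ω → ℝ) (σs : ℕ → Ω → S) (s : S) (ω : Ω) : ℝ :=
  sInf {t : ℝ | 0 ≤ t ∧ s ∈ coveredFrom (∅ : Set S) v τ σs ω t}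


section AuxGrowth

variable {S : Type*} [MetricSpace S] {Ω : Type*}

lemma mem_coveredFrom {x₀ : Set S} {v : ℝ} {τ : ℕ → Ω → ℝ} {σs : ℕ → Ω → S} {ω : Ω}
    {t : ℝ} {p : S} :
    p ∈ coveredFrom x₀ v τ σs ω t ↔
      (∃ q ∈ x₀, dist p q ≤ v * t) ∨
        ∃ i, τ i ω ≤ t ∧ dist p (σs i ω) ≤ v * (t - τ i ω) := by
  simp [coveredFrom, Set.mem_iUnion, Metric.mem_closedBall]

lemma coveredFrom_mono_t {x₀ : Set S} {v : ℝ} (hv : 0 ≤ v) (τ : ℕ → Ω → ℝ)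
    (σs : ℕ → Ω → S) (ω : Ω) {s t : ℝ} (hst : s ≤ t) :
    coveredFrom x₀ v τ σs ω s ⊆ coveredFrom x₀ v τ σs ω t := by
  intro p hp
  rcases mem_coveredFrom.mp hp with ⟨q, hq, hd⟩ | ⟨i, hi, hd⟩
  · exact mem_coveredFrom.mpr (Or.inl ⟨q, hq, hd.trans (mul_le_mul_of_nonneg_left hst hv)⟩)
  · exact mem_coveredFrom.mpr (Or.inr ⟨i, hi.trans hst,
      hd.trans (mul_le_mul_of_nonneg_left (by linarith) hv)⟩)

lemma exists_cover [CompactSpace S] [Nonempty S] (x₀ : Set S) {v : ℝ} (hv : 0 < v)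
    (τ : ℕ → Ω → ℝ) (σs : ℕ → Ω → S) (ω : Ω) (hτ0 : 0 < τ 0 ω) :
    ∃ t, 0 ≤ t ∧ coveredFrom x₀ v τ σs ω t = Set.univ := by
  refine ⟨τ 0 ω + diam (Set.univ : Set S) / v, by positivity, ?_⟩
  rw [Set.eq_univ_iff_forall]
  intro p
  refine mem_coveredFrom.mpr (Or.inr ⟨0, le_add_of_nonneg_right (by positivity), ?_⟩)
  have h1 : τ 0 ω + diam (Set.univ : Set S) / v - τ 0 ω = diam (Set.univ : Set S) / v := by ring
  rw [h1, mul_div_cancel₀ _ hv.ne']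
  exact dist_le_diam_of_mem isCompact_univ.isBounded (Set.mem_univ _) (Set.mem_univ _)

lemma coverSet_bddBelow (x₀ : Set S) (v : ℝ) (τ : ℕ → Ω → ℝ) (σs : ℕ → Ω → S) (ω : Ω) :
    BddBelow {t : ℝ | 0 ≤ t ∧ coveredFrom x₀ v τ σs ω t = Set.univ} :=
  ⟨0, fun _ ht => ht.1⟩

lemma pointSet_bddBelow (v : ℝ) (τ : ℕ → Ω → ℝ) (σs : ℕ → Ω → S) (σ₀ : S) (ω : Ω) :
    BddBelow {t : ℝ | 0 ≤ t ∧ σ₀ ∈ coveredFrom (∅ : Set S) v τ σs ω t} :=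
  ⟨0, fun _ ht => ht.1⟩

lemma coverTimeFrom_nonneg (x₀ : Set S) (v : ℝ) (τ : ℕ → Ω → ℝ) (σs : ℕ → Ω → S) (ω : Ω) :
    0 ≤ coverTimeFrom x₀ v τ σs ω :=
  Real.sInf_nonneg fun _ ht => ht.1

lemma pointCoverTime_nonneg (v : ℝ) (τ : ℕ → Ω → ℝ) (σs : ℕ → Ω → S) (σ₀ : S) (ω : Ω) :
    0 ≤ pointCoverTime v τ σs σ₀ ω :=
  Real.sInf_nonneg fun _ ht => ht.1

lemma pointCoverTime_spec {v : ℝ} (hv : 0 < v) (τ : ℕ → Ω → ℝ) (σs : ℕ → Ω → S)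
    (σ₀ : S) (ω : Ω) (hτ0 : 0 < τ 0 ω) (hmono : StrictMono fun i => τ i ω)
    (htend : Filter.Tendsto (fun i => τ i ω) Filter.atTop Filter.atTop) :
    ∃ j, pointCoverTime v τ σs σ₀ ω = τ j ω + dist σ₀ (σs j ω) / v := by
  set b : ℕ → ℝ := fun i => τ i ω + dist σ₀ (σs i ω) / v with hb
  have hτpos : ∀ i, 0 < τ i ω := fun i => hτ0.trans_le (hmono.monotone (Nat.zero_le i))
  have hbτ : ∀ i, τ i ω ≤ b i := fun i => le_add_of_nonneg_right (by positivity)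
  have htb : Filter.Tendsto b Filter.atTop Filter.atTop := Filter.tendsto_atTop_mono hbτ htend
  have htb' : Filter.Tendsto b Filter.cofinite Filter.atTop := by
    rwa [Nat.cofinite_eq_atTop]
  obtain ⟨j, hj⟩ := htb'.exists_forall_le
  have hset : {t : ℝ | 0 ≤ t ∧ σ₀ ∈ coveredFrom (∅ : Set S) v τ σs ω t} = Set.Ici (b j) := by
    ext t
    simp only [Set.mem_setOf_eq, Set.mem_Ici, mem_coveredFrom]
    constructor
    · rintro ⟨ht0, h | ⟨i, hi, hd⟩⟩
      · simp at h
      · have h1 : dist σ₀ (σs i ω) / v ≤ t - τ i ω := by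
          rw [div_le_iff₀ hv]
          calc dist σ₀ (σs i ω) ≤ v * (t - τ i ω) := hd
          _ = (t - τ i ω) * v := mul_comm _ _
        exact (hj i).trans (by simp only [hb]; linarith)
    · intro ht
      have hτj : τ j ω ≤ t := (hbτ j).trans ht
      refine ⟨(hτpos j).le.trans hτj, Or.inr ⟨j, hτj, ?_⟩⟩
      have h1 : dist σ₀ (σs j ω) / v ≤ t - τ j ω := by simp only [hb] at ht; linarith
      calc dist σ₀ (σs j ω) = v * (dist σ₀ (σs j ω) / v) := by field_simp
      _ ≤ v * (t - τ j ω) := by gcongr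
  exact ⟨j, by rw [pointCoverTime, hset, csInf_Ici]⟩

lemma coverTimeFrom_key [CompactSpace S] [Nonempty S] {v : ℝ} (hv : 0 < v)
    (τ : ℕ → Ω → ℝ) (σs : ℕ → Ω → S) (ω : Ω) (hτ0 : 0 < τ 0 ω)
    (hmono : StrictMono fun i => τ i ω)
    (htend : Filter.Tendsto (fun i => τ i ω) Filter.atTop Filter.atTop)
    (x : Set S) (σ₀ : S) :
    coverTimeFrom x v τ σs ω ≤
      pointCoverTime v τ σs σ₀ ω + coverTimeFrom (insert σ₀ x) v τ σs ω := by
  obtain ⟨j, hj⟩ := pointCoverTime_spec hv τ σs σ₀ ω hτ0 hmono htend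
  set C := pointCoverTime v τ σs σ₀ ω with hC
  have hτpos : 0 < τ j ω := hτ0.trans_le (hmono.monotone (Nat.zero_le j))
  have hτjC : τ j ω ≤ C := by
    rw [hj]; exact le_add_of_nonneg_right (by positivity)
  have hdj : dist σ₀ (σs j ω) ≤ v * (C - τ j ω) := by
    have h1 : C - τ j ω = dist σ₀ (σs j ω) / v := by rw [hj]; ring
    rw [h1, mul_div_cancel₀ _ hv.ne']
  have hC0 : 0 ≤ C := hτpos.le.trans hτjC
  have hmain : coverTimeFrom x v τ σs ω - C ≤ coverTimeFrom (insert σ₀ x) v τ σs ω := by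
    apply le_csInf
    · obtain ⟨t, ht0, hcov⟩ := exists_cover (insert σ₀ x) hv τ σs ω hτ0
      exact ⟨t, ht0, hcov⟩
    rintro t ⟨ht0, hcov⟩
    rw [sub_le_iff_le_add]
    apply csInf_le (coverSet_bddBelow x v τ σs ω)
    refine ⟨by linarith, ?_⟩
    apply Set.eq_univ_of_univ_subset
    rw [← hcov]
    intro p hp
    have hvC : 0 ≤ v * C := mul_nonneg hv.le hC0
    have hvt : 0 ≤ v * t := mul_nonneg hv.le ht0
    rcases mem_coveredFrom.mp hp with ⟨q, hq, hd⟩ | ⟨i, hi, hd⟩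
    · rcases Set.mem_insert_iff.mp hq with rfl | hqx
      · refine mem_coveredFrom.mpr (Or.inr ⟨j, by linarith, ?_⟩)
        calc dist p (σs j ω) ≤ dist p q + dist q (σs j ω) := dist_triangle _ _ _
        _ ≤ v * t + v * (C - τ j ω) := add_le_add hd hdj
        _ = v * (t + C - τ j ω) := by ring
      · exact mem_coveredFrom.mpr (Or.inl ⟨q, hqx, hd.trans (by linarith)⟩)
    · refine mem_coveredFrom.mpr (Or.inr ⟨i, by linarith, hd.trans ?_⟩)
      have : 0 ≤ v * C := hvC
      nlinarith
  linarith

end AuxGrowth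


section AuxMeas

variable {S : Type*} [MetricSpace S] [MeasurableSpace S] [BorelSpace S]
  {Ω : Type*} [MeasurableSpace Ω]

lemma measurableSet_mem_coveredFrom (x₀ : Set S) (v : ℝ) {τ : ℕ → Ω → ℝ} {σs : ℕ → Ω → S}
    (hτ : ∀ i, Measurable (τ i)) (hσ : ∀ i, Measurable (σs i)) (d : S) (t : ℝ) :
    MeasurableSet {ω | d ∈ coveredFrom x₀ v τ σs ω t} := by
  have heq : {ω | d ∈ coveredFrom x₀ v τ σs ω t} =
      {ω : Ω | ∃ q ∈ x₀, dist d q ≤ v * t} ∪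
        ⋃ i, ({ω | τ i ω ≤ t} ∩ {ω | dist d (σs i ω) ≤ v * (t - τ i ω)}) := by
    ext ω
    simp only [Set.mem_setOf_eq, mem_coveredFrom, Set.mem_union, Set.mem_iUnion,
      Set.mem_inter_iff]
  rw [heq]
  refine (MeasurableSet.const _).union (MeasurableSet.iUnion fun i => ?_)
  refine (measurableSet_le (hτ i) measurable_const).inter (measurableSet_le ?_ ?_)
  · exact (continuous_const.dist continuous_id).measurable.comp (hσ i)
  · exact (measurable_const.sub (hτ i)).const_mul v

lemma isClosed_coveredFrom {x₀ : Set S} (hx₀ : IsCompact x₀) (v : ℝ)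
    (τ : ℕ → Ω → ℝ) (σs : ℕ → Ω → S) (ω : Ω)
    (htend : Filter.Tendsto (fun i => τ i ω) Filter.atTop Filter.atTop) (t : ℝ) :
    IsClosed (coveredFrom x₀ v τ σs ω t) := by
  apply IsClosed.union
  · rcases Set.eq_empty_or_nonempty x₀ with rfl | hne
    · have : {p : S | ∃ q ∈ (∅ : Set S), dist p q ≤ v * t} = ∅ := by simp
      rw [this]; exact isClosed_empty
    · have heq : {p : S | ∃ q ∈ x₀, dist p q ≤ v * t} = {p : S | infDist p x₀ ≤ v * t} := by
        ext p
        constructor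
        · rintro ⟨q, hq, hd⟩; exact le_trans (infDist_le_dist_of_mem hq) hd
        · intro hp
          obtain ⟨q, hq, hdq⟩ := hx₀.exists_infDist_eq_dist hne p
          exact ⟨q, hq, hdq ▸ hp⟩
      rw [heq]
      exact isClosed_le (continuous_infDist_pt x₀) continuous_const
  · have hfin : {i : ℕ | τ i ω ≤ t}.Finite := by
      obtain ⟨N, hN⟩ := Filter.eventually_atTop.mp (htend.eventually_gt_atTop t)
      refine Set.Finite.subset (Set.finite_Iio N) fun i hi => ?_
      by_contra h
      exact absurd hi (not_le.mpr (hN i (not_lt.mp h)))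
    exact hfin.isClosed_biUnion fun i _ => Metric.isClosed_closedBall

lemma measurableSet_coverEvent [CompactSpace S] [Nonempty S] {x₀ : Set S} (hx₀ : IsCompact x₀)
    (v : ℝ) {τ : ℕ → Ω → ℝ} {σs : ℕ → Ω → S}
    (hτ : ∀ i, Measurable (τ i)) (hσ : ∀ i, Measurable (σs i))
    (htend : ∀ ω, Filter.Tendsto (fun i => τ i ω) Filter.atTop Filter.atTop) (t : ℝ) :
    MeasurableSet {ω | coveredFrom x₀ v τ σs ω t = Set.univ} := by
  have heq : {ω | coveredFrom x₀ v τ σs ω t = Set.univ} =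
      ⋂ n, {ω | TopologicalSpace.denseSeq S n ∈ coveredFrom x₀ v τ σs ω t} := by
    ext ω
    simp only [Set.mem_iInter, Set.mem_setOf_eq]
    constructor
    · intro h n; rw [h]; trivial
    · intro h
      have hd : Dense (coveredFrom x₀ v τ σs ω t) :=
        (TopologicalSpace.denseRange_denseSeq S).mono (Set.range_subset_iff.mpr h)
      rw [← (isClosed_coveredFrom hx₀ v τ σs ω (htend ω) t).closure_eq]
      exact hd.closure_eq
  rw [heq]
  exact MeasurableSet.iInter fun n => measurableSet_mem_coveredFrom x₀ v hτ hσ _ t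

lemma measurable_coverTimeFrom [CompactSpace S] [Nonempty S] {x₀ : Set S}
    (hx₀ : IsCompact x₀) {v : ℝ} (hv : 0 < v) {τ : ℕ → Ω → ℝ} {σs : ℕ → Ω → S}
    (hτ : ∀ i, Measurable (τ i)) (hσ : ∀ i, Measurable (σs i))
    (hτ0 : ∀ ω, 0 < τ 0 ω)
    (htend : ∀ ω, Filter.Tendsto (fun i => τ i ω) Filter.atTop Filter.atTop) :
    Measurable (coverTimeFrom x₀ v τ σs) := by
  apply measurable_of_Iio
  intro a
  have heq : coverTimeFrom x₀ v τ σs ⁻¹' Set.Iio a =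
      ⋃ q ∈ {q : ℚ | 0 ≤ (q : ℝ) ∧ (q : ℝ) < a},
        {ω | coveredFrom x₀ v τ σs ω (q : ℝ) = Set.univ} := by
    ext ω
    simp only [Set.mem_preimage, Set.mem_Iio, Set.mem_iUnion, Set.mem_setOf_eq, exists_prop]
    constructor
    · intro h
      have hne : {t : ℝ | 0 ≤ t ∧ coveredFrom x₀ v τ σs ω t = Set.univ}.Nonempty := by
        obtain ⟨t, ht0, hc⟩ := exists_cover x₀ hv τ σs ω (hτ0 ω)
        exact ⟨t, ht0, hc⟩
      obtain ⟨t, ht, hta⟩ := (csInf_lt_iff (coverSet_bddBelow x₀ v τ σs ω) hne).mp h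
      obtain ⟨q, hq1, hq2⟩ := exists_rat_btwn hta
      refine ⟨q, ⟨ht.1.trans hq1.le, hq2⟩, ?_⟩
      exact Set.eq_univ_of_univ_subset (ht.2 ▸ coveredFrom_mono_t hv.le τ σs ω hq1.le)
    · rintro ⟨q, ⟨hq0, hqa⟩, hcov⟩
      exact lt_of_le_of_lt (csInf_le (coverSet_bddBelow x₀ v τ σs ω) ⟨hq0, hcov⟩) hqa
  rw [heq]
  exact MeasurableSet.biUnion (Set.to_countable _)
    (fun q _ => measurableSet_coverEvent hx₀ v hτ hσ htend _)

lemma measurable_pointCoverTime [CompactSpace S] [Nonempty S] {v : ℝ} (hv : 0 < v)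
    {τ : ℕ → Ω → ℝ} {σs : ℕ → Ω → S}
    (hτ : ∀ i, Measurable (τ i)) (hσ : ∀ i, Measurable (σs i))
    (hτ0 : ∀ ω, 0 < τ 0 ω) (σ₀ : S) :
    Measurable (pointCoverTime v τ σs σ₀) := by
  apply measurable_of_Iio
  intro a
  have heq : pointCoverTime v τ σs σ₀ ⁻¹' Set.Iio a =
      ⋃ q ∈ {q : ℚ | 0 ≤ (q : ℝ) ∧ (q : ℝ) < a},
        {ω | σ₀ ∈ coveredFrom (∅ : Set S) v τ σs ω (q : ℝ)} := by
    ext ω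
    simp only [Set.mem_preimage, Set.mem_Iio, Set.mem_iUnion, Set.mem_setOf_eq, exists_prop]
    constructor
    · intro h
      have hne : {t : ℝ | 0 ≤ t ∧ σ₀ ∈ coveredFrom (∅ : Set S) v τ σs ω t}.Nonempty := by
        obtain ⟨t, ht0, hc⟩ := exists_cover (∅ : Set S) hv τ σs ω (hτ0 ω)
        exact ⟨t, ht0, by rw [hc]; trivial⟩
      obtain ⟨t, ht, hta⟩ := (csInf_lt_iff (pointSet_bddBelow v τ σs σ₀ ω) hne).mp h
      obtain ⟨q, hq1, hq2⟩ := exists_rat_btwn hta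
      exact ⟨q, ⟨ht.1.trans hq1.le, hq2⟩, coveredFrom_mono_t hv.le τ σs ω hq1.le ht.2⟩
    · rintro ⟨q, ⟨hq0, hqa⟩, hcov⟩
      exact lt_of_le_of_lt (csInf_le (pointSet_bddBelow v τ σs σ₀ ω) ⟨hq0, hcov⟩) hqa
  rw [heq]
  exact MeasurableSet.biUnion (Set.to_countable _)
    (fun q _ => measurableSet_mem_coveredFrom ∅ v hτ hσ σ₀ _)

end AuxMeas

lemma integrable_id_expMeasure {lam : ℝ} (hlam : 0 < lam) :
    Integrable id (expMeasure lam) := by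
  rw [expMeasure, gammaMeasure]
  rw [show gammaPDF 1 lam = fun x => ENNReal.ofReal (gammaPDFReal 1 lam x) from rfl,
    integrable_withDensity_iff ((measurable_gammaPDFReal 1 lam).ennreal_ofReal)
    (Filter.Eventually.of_forall fun x => ENNReal.ofReal_lt_top)]
  have heq : (fun x : ℝ => id x * (ENNReal.ofReal (gammaPDFReal 1 lam x)).toReal) =
      Set.indicator (Set.Ici 0) (fun x => lam * (x * Real.exp (-lam * x))) := by
    ext xx
    by_cases hx : 0 ≤ xx
    · rw [Set.indicator_of_mem (Set.mem_Ici.mpr hx)]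
      have hpdf : gammaPDFReal 1 lam xx = lam * Real.exp (-lam * xx) := by
        simp [gammaPDFReal, if_pos hx, Real.Gamma_one, Real.rpow_one, Real.rpow_zero,
          neg_mul]
      rw [ENNReal.toReal_ofReal (by rw [hpdf]; positivity), hpdf]
      simp [id]; ring
    · rw [Set.indicator_of_notMem (by simpa using hx)]
      simp [gammaPDFReal, if_neg hx]
  rw [heq, integrable_indicator_iff measurableSet_Ici, integrableOn_Ici_iff_integrableOn_Ioi]
  apply Integrable.const_mul
  have h := integrableOn_rpow_mul_exp_neg_mul_rpow (by norm_num : (-1:ℝ) < 1) (p := 1) one_pos hlam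
  apply h.congr_fun ?_ measurableSet_Ioi
  intro x hx
  simp only [Real.rpow_one]

lemma coveredFrom_mono_set {S : Type*} [MetricSpace S] {Ω : Type*} {x₀ x₁ : Set S}
    (hx : x₀ ⊆ x₁) (v : ℝ) (τ : ℕ → Ω → ℝ) (σs : ℕ → Ω → S) (ω : Ω) (t : ℝ) :
    coveredFrom x₀ v τ σs ω t ⊆ coveredFrom x₁ v τ σs ω t := by
  intro p hp
  rcases mem_coveredFrom.mp hp with ⟨q, hq, hd⟩ | h
  · exact mem_coveredFrom.mpr (Or.inl ⟨q, hx hq, hd⟩)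
  · exact mem_coveredFrom.mpr (Or.inr h)

/-- Growth model with seed rate `lam`: seeds arrive at times `0 < τ 0 < τ 1 < ⋯` of a
rate-`lam` Poisson process at i.i.d. positions with law `μ`, all jointly independent. -/
structure IsGrowthModelRate {S : Type*} [MetricSpace S] [MeasurableSpace S]
    {Ω : Type*} [MeasurableSpace Ω] (P : Measure Ω) (μ : Measure S) (lam : ℝ)
    (τ : ℕ → Ω → ℝ) (σs : ℕ → Ω → S) : Prop where
  meas_τ : ∀ i, Measurable (τ i)
  meas_σ : ∀ i, Measurable (σs i)
  pos : ∀ ω, 0 < τ 0 ω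
  mono : ∀ ω, StrictMono fun i => τ i ω
  tendsto : ∀ ω, Filter.Tendsto (fun i => τ i ω) Filter.atTop Filter.atTop
  dist : ∀ i, P.map (fun ω => (interArrival τ i ω, σs i ω)) = (expMeasure lam).prod μ
  indep : iIndepFun
    (fun i ω => (interArrival τ i ω, σs i ω)) P

/-- Key coupling inequality for the growth model: adding the extra seed point `σ₀` to the
initial set decreases the expected cover time by at most the expected time `E[C(σ₀)]` for a
fresh growth process to reach `σ₀`. -/
theorem growth_model_coupling_inequality
    {S : Type*} [MetricSpace S] [CompactSpace S] [Nonempty S]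
    [MeasurableSpace S] [BorelSpace S]
    {Ω : Type*} [MeasurableSpace Ω] (P : Measure Ω) [IsProbabilityMeasure P]
    (μ : Measure S) [IsProbabilityMeasure μ] (lam v : ℝ) (hlam : 0 < lam) (hv : 0 < v)
    (τ : ℕ → Ω → ℝ) (σs : ℕ → Ω → S)
    (hmodel : IsGrowthModelRate P μ lam τ σs)
    (x : Set S) (hx : IsCompact x) (σ₀ : S) :
    (∫ ω, coverTimeFrom x v τ σs ω ∂P) - ∫ ω, coverTimeFrom (insert σ₀ x) v τ σs ω ∂P ≤
      ∫ ω, pointCoverTime v τ σs σ₀ ω ∂P := by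
  obtain ⟨hτ, hσ, hpos, hmono, htend, hdist, _⟩ := hmodel
  have hmapτ : P.map (τ 0) = expMeasure lam := by
    have h0 := hdist 0
    have hpair : Measurable (fun ω => (interArrival τ 0 ω, σs 0 ω)) := by
      have : (fun ω => (interArrival τ 0 ω, σs 0 ω)) = fun ω => (τ 0 ω, σs 0 ω) := rfl
      rw [this]; exact (hτ 0).prodMk (hσ 0)
    rw [show (τ 0) = Prod.fst ∘ (fun ω => (interArrival τ 0 ω, σs 0 ω)) from rfl,
      ← Measure.map_map measurable_fst hpair, h0, Measure.map_fst_prod]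
    simp
  have hτ0int : Integrable (fun ω => τ 0 ω) P := by
    have hid : Integrable id (P.map (τ 0)) := by
      rw [hmapτ]; exact integrable_id_expMeasure hlam
    exact (integrable_map_measure aestronglyMeasurable_id (hτ 0).aemeasurable).mp hid
  have hhle : ∀ ω, pointCoverTime v τ σs σ₀ ω ≤ τ 0 ω + diam (Set.univ : Set S) / v := by
    intro ω
    apply csInf_le (pointSet_bddBelow v τ σs σ₀ ω)
    have hτ0 := hpos ω
    refine ⟨by positivity, ?_⟩
    refine mem_coveredFrom.mpr (Or.inr ⟨0, le_add_of_nonneg_right (by positivity), ?_⟩)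
    have h1 : τ 0 ω + diam (Set.univ : Set S) / v - τ 0 ω = diam (Set.univ : Set S) / v := by
      ring
    rw [h1, mul_div_cancel₀ _ hv.ne']
    exact dist_le_diam_of_mem isCompact_univ.isBounded (Set.mem_univ _) (Set.mem_univ _)
  have hhint : Integrable (pointCoverTime v τ σs σ₀) P := by
    refine Integrable.mono' (hτ0int.add (integrable_const (diam (Set.univ : Set S) / v)))
      (measurable_pointCoverTime hv hτ hσ hpos σ₀).aestronglyMeasurable
      (Filter.Eventually.of_forall fun ω => ?_)
    rw [Real.norm_eq_abs, abs_of_nonneg (pointCoverTime_nonneg v τ σs σ₀ ω)]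
    exact hhle ω
  have hkey : ∀ ω, coverTimeFrom x v τ σs ω ≤
      pointCoverTime v τ σs σ₀ ω + coverTimeFrom (insert σ₀ x) v τ σs ω :=
    fun ω => coverTimeFrom_key hv τ σs ω (hpos ω) (hmono ω) (htend ω) x σ₀
  have hg0 : 0 ≤ ∫ ω, coverTimeFrom (insert σ₀ x) v τ σs ω ∂P :=
    integral_nonneg fun ω => coverTimeFrom_nonneg _ v τ σs ω
  have hh0 : 0 ≤ ∫ ω, pointCoverTime v τ σs σ₀ ω ∂P :=
    integral_nonneg fun ω => pointCoverTime_nonneg v τ σs σ₀ ω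
  by_cases hf : Integrable (coverTimeFrom x v τ σs) P
  · have hgm : Measurable (coverTimeFrom (insert σ₀ x) v τ σs) :=
      measurable_coverTimeFrom (hx.insert σ₀) hv hτ hσ hpos htend
    have hgf : ∀ ω, coverTimeFrom (insert σ₀ x) v τ σs ω ≤ coverTimeFrom x v τ σs ω := by
      intro ω
      apply csInf_le_csInf (coverSet_bddBelow _ v τ σs ω)
      · obtain ⟨t, ht0, hc⟩ := exists_cover x hv τ σs ω (hpos ω)
        exact ⟨t, ht0, hc⟩
      · rintro t ⟨ht0, hcov⟩
        exact ⟨ht0, Set.eq_univ_of_univ_subset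
          (hcov ▸ coveredFrom_mono_set (Set.subset_insert σ₀ x) v τ σs ω t)⟩
    have hgint : Integrable (coverTimeFrom (insert σ₀ x) v τ σs) P := by
      refine Integrable.mono' hf hgm.aestronglyMeasurable
        (Filter.Eventually.of_forall fun ω => ?_)
      rw [Real.norm_eq_abs, abs_of_nonneg (coverTimeFrom_nonneg _ v τ σs ω)]
      exact hgf ω
    have hint : ∫ ω, coverTimeFrom x v τ σs ω ∂P ≤
        ∫ ω, (pointCoverTime v τ σs σ₀ ω + coverTimeFrom (insert σ₀ x) v τ σs ω) ∂P :=
      integral_mono hf (hhint.add hgint) hkey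
    rw [integral_add hhint hgint] at hint
    linarith
  · rw [integral_undef hf]
    linarith


end
end

section
/- In the standardized growth model on a connected compact metric space of diameter Δ, there is an absolute constant κ₁ such that Δ ≤ κ₁·(E[C])². -/
open MeasureTheory ProbabilityTheory Metric Set

noncomputable section

/-- The covered region at time `t` in the standardized growth model. -/
def coveredSet {S : Type*} [MetricSpace S] {Ω : Type*} (τ : ℕ → Ω → ℝ)
    (σs : ℕ → Ω → S) (ω : Ω) (t : ℝ) : Set S :=
  ⋃ i ∈ {i : ℕ | τ i ω ≤ t}, Metric.closedBall (σs i ω) (t - τ i ω)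

/-- The cover time of the whole space. -/
def coverTime {S : Type*} [MetricSpace S] {Ω : Type*} (τ : ℕ → Ω → ℝ)
    (σs : ℕ → Ω → S) (ω : Ω) : ℝ :=
  sInf {t : ℝ | 0 ≤ t ∧ coveredSet τ σs ω t = Set.univ}

/-- The standardized growth model (`λ = v = 1`): seeds arrive at the times
`0 < τ 0 < τ 1 < ⋯` of a rate-1 Poisson process (i.i.d. Exponential(1) interarrivals),
at i.i.d. positions `σs i` with distribution `μ`, all jointly independent. -/
structure IsGrowthModel {S : Type*} [MetricSpace S] [MeasurableSpace S]
    {Ω : Type*} [MeasurableSpace Ω] (P : Measure Ω) (μ : Measure S)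
    (τ : ℕ → Ω → ℝ) (σs : ℕ → Ω → S) : Prop where
  meas_τ : ∀ i, Measurable (τ i)
  meas_σ : ∀ i, Measurable (σs i)
  pos : ∀ ω, 0 < τ 0 ω
  mono : ∀ ω, StrictMono fun i => τ i ω
  tendsto : ∀ ω, Filter.Tendsto (fun i => τ i ω) Filter.atTop Filter.atTop
  dist : ∀ i, P.map (fun ω => (interArrival τ i ω, σs i ω)) = (expMeasure 1).prod μ
  indep : iIndepFun
    (fun i ω => (interArrival τ i ω, σs i ω)) P

section Det

variable {S : Type*} [MetricSpace S] [CompactSpace S] [Nonempty S]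
  {Ω : Type*} (τ : ℕ → Ω → ℝ) (σs : ℕ → Ω → S)

/-- auxiliary arrival function -/
def arrF (ω : Ω) (i : ℕ) (x : S) : ℝ := τ i ω + dist x (σs i ω)

/-- explicit formula for the cover time -/
def coverTimeAux (ω : Ω) : ℝ :=
  ⨆ n, ⨅ i, arrF τ σs ω i (TopologicalSpace.denseSeq S n)

variable {τ σs} {ω : Ω}

omit [CompactSpace S] [Nonempty S] in
lemma mem_coveredSet {t : ℝ} {x : S} :
    x ∈ coveredSet τ σs ω t ↔ ∃ i, arrF τ σs ω i x ≤ t := by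
  simp only [coveredSet, mem_iUnion, mem_setOf_eq, Metric.mem_closedBall, exists_prop, arrF]
  constructor
  · rintro ⟨i, h1, h2⟩; exact ⟨i, by linarith⟩
  · rintro ⟨i, h⟩
    have hd : (0:ℝ) ≤ dist x (σs i ω) := dist_nonneg
    exact ⟨i, by linarith, by linarith⟩

omit [CompactSpace S] [Nonempty S] in
lemma coveredSet_mono {t t' : ℝ} (h : t ≤ t') :
    coveredSet τ σs ω t ⊆ coveredSet τ σs ω t' := fun x hx => by
  rw [mem_coveredSet] at hx ⊢
  obtain ⟨i, hi⟩ := hx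
  exact ⟨i, hi.trans h⟩

omit [CompactSpace S] [Nonempty S] in
lemma arrF_nonneg (hpos : 0 < τ 0 ω) (hmono : StrictMono fun i => τ i ω) (i : ℕ) (x : S) :
    0 ≤ arrF τ σs ω i x := by
  have h1 : τ 0 ω ≤ τ i ω := (hmono.monotone) (Nat.zero_le i)
  have := dist_nonneg (x := x) (y := σs i ω)
  simp only [arrF]; linarith

omit [CompactSpace S] [Nonempty S] in
lemma arrF_bdd (hpos : 0 < τ 0 ω) (hmono : StrictMono fun i => τ i ω) (x : S) :
    BddBelow (Set.range fun i => arrF τ σs ω i x) := by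
  refine ⟨0, ?_⟩
  rintro r ⟨i, rfl⟩
  exact arrF_nonneg hpos hmono i x

omit [CompactSpace S] [Nonempty S] in
lemma arrF_exists_min (htend : Filter.Tendsto (fun i => τ i ω) Filter.atTop Filter.atTop)
    (x : S) : ∃ i, ∀ j, arrF τ σs ω i x ≤ arrF τ σs ω j x := by
  have h : Filter.Tendsto (fun i => arrF τ σs ω i x) Filter.cofinite Filter.atTop := by
    rw [Nat.cofinite_eq_atTop]
    exact Filter.tendsto_atTop_mono (fun i => le_add_of_nonneg_right dist_nonneg) htend
  exact h.exists_forall_le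

omit [CompactSpace S] [Nonempty S] in
lemma iInf_arrF_le (hpos : 0 < τ 0 ω) (hmono : StrictMono fun i => τ i ω) (x : S) (i : ℕ) :
    (⨅ j, arrF τ σs ω j x) ≤ arrF τ σs ω i x :=
  ciInf_le (arrF_bdd hpos hmono x) i

omit [CompactSpace S] [Nonempty S] in
lemma iInf_arrF_lip (hpos : 0 < τ 0 ω) (hmono : StrictMono fun i => τ i ω) (x y : S) :
    (⨅ j, arrF τ σs ω j x) ≤ (⨅ j, arrF τ σs ω j y) + dist x y := by
  have h : ∀ j, (⨅ j, arrF τ σs ω j x) - dist x y ≤ arrF τ σs ω j y := by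
    intro j
    have h1 : arrF τ σs ω j x ≤ arrF τ σs ω j y + dist x y := by
      simp only [arrF]
      have := dist_triangle x y (σs j ω)
      linarith
    have := iInf_arrF_le (σs := σs) hpos hmono x j
    linarith
  have := le_ciInf h
  linarith

lemma iInf_arrF_le_coverTimeAux (hpos : 0 < τ 0 ω) (hmono : StrictMono fun i => τ i ω) (x : S) :
    (⨅ j, arrF τ σs ω j x) ≤ coverTimeAux τ σs ω := by
  have hbdd : BddAbove (Set.range fun n =>
      ⨅ i, arrF τ σs ω i (TopologicalSpace.denseSeq S n)) := by
    refine ⟨τ 0 ω + Metric.diam (Set.univ : Set S), ?_⟩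
    rintro r ⟨n, rfl⟩
    refine le_trans (iInf_arrF_le hpos hmono _ 0) ?_
    exact add_le_add le_rfl
      (dist_le_diam_of_mem isBounded_of_compactSpace (mem_univ _) (mem_univ _))
  refine le_of_forall_pos_le_add ?_
  intro ε hε
  obtain ⟨n, hn⟩ := (TopologicalSpace.denseRange_denseSeq S).exists_dist_lt x hε
  have h1 := iInf_arrF_lip (σs := σs) hpos hmono x (TopologicalSpace.denseSeq S n)
  have h2 : (⨅ j, arrF τ σs ω j (TopologicalSpace.denseSeq S n)) ≤ coverTimeAux τ σs ω :=
    le_ciSup hbdd n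
  linarith

lemma coverTimeAux_nonneg (hpos : 0 < τ 0 ω) (hmono : StrictMono fun i => τ i ω) :
    0 ≤ coverTimeAux τ σs ω := by
  refine le_trans ?_ (iInf_arrF_le_coverTimeAux hpos hmono (TopologicalSpace.denseSeq S 0))
  exact le_ciInf fun i => arrF_nonneg hpos hmono i _

lemma covered_coverTimeAux (hpos : 0 < τ 0 ω) (hmono : StrictMono fun i => τ i ω)
    (htend : Filter.Tendsto (fun i => τ i ω) Filter.atTop Filter.atTop) :
    coveredSet τ σs ω (coverTimeAux τ σs ω) = Set.univ := by
  rw [eq_univ_iff_forall]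
  intro x
  rw [mem_coveredSet]
  obtain ⟨i, hi⟩ := arrF_exists_min htend x
  refine ⟨i, ?_⟩
  have h1 : arrF τ σs ω i x ≤ ⨅ j, arrF τ σs ω j x := le_ciInf hi
  exact h1.trans (iInf_arrF_le_coverTimeAux hpos hmono x)

lemma coverTimeAux_le (hpos : 0 < τ 0 ω) (hmono : StrictMono fun i => τ i ω)
    {t : ℝ} (ht : coveredSet τ σs ω t = Set.univ) :
    coverTimeAux τ σs ω ≤ t := by
  refine ciSup_le fun n => ?_
  have hx : TopologicalSpace.denseSeq S n ∈ coveredSet τ σs ω t := ht ▸ mem_univ _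
  rw [mem_coveredSet] at hx
  obtain ⟨i, hi⟩ := hx
  exact le_trans (iInf_arrF_le hpos hmono _ i) hi

lemma coverTime_eq (hpos : 0 < τ 0 ω) (hmono : StrictMono fun i => τ i ω)
    (htend : Filter.Tendsto (fun i => τ i ω) Filter.atTop Filter.atTop) :
    coverTime τ σs ω = coverTimeAux τ σs ω := by
  refine le_antisymm ?_ ?_
  · exact csInf_le ⟨0, fun t ht => ht.1⟩
      ⟨coverTimeAux_nonneg hpos hmono, covered_coverTimeAux hpos hmono htend⟩
  · refine le_csInf ?_ ?_
    · refine ⟨τ 0 ω + Metric.diam (Set.univ : Set S), ?_, ?_⟩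
      · have h0 := Metric.diam_nonneg (s := (Set.univ : Set S)); linarith
      · rw [eq_univ_iff_forall]
        intro x
        rw [mem_coveredSet]
        exact ⟨0, add_le_add le_rfl
          (dist_le_diam_of_mem isBounded_of_compactSpace (mem_univ _) (mem_univ _))⟩
    · rintro t ⟨-, ht⟩
      exact coverTimeAux_le hpos hmono ht

lemma le_coverTimeAux (hpos : 0 < τ 0 ω) (hmono : StrictMono fun i => τ i ω) :
    τ 0 ω ≤ coverTimeAux τ σs ω := by
  refine le_trans ?_ (iInf_arrF_le_coverTimeAux hpos hmono (TopologicalSpace.denseSeq S 0))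
  refine le_ciInf fun i => ?_
  have h1 : τ 0 ω ≤ τ i ω := (hmono.monotone) (Nat.zero_le i)
  have := dist_nonneg (x := TopologicalSpace.denseSeq S 0) (y := σs i ω)
  simp only [arrF]; linarith

lemma coverTimeAux_le' (hpos : 0 < τ 0 ω) (hmono : StrictMono fun i => τ i ω) :
    coverTimeAux τ σs ω ≤ τ 0 ω + Metric.diam (Set.univ : Set S) := by
  refine ciSup_le fun n => ?_
  refine le_trans (iInf_arrF_le hpos hmono _ 0) ?_
  exact add_le_add le_rfl
    (dist_le_diam_of_mem isBounded_of_compactSpace (mem_univ _) (mem_univ _))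

lemma measurable_coverTimeAux [MeasurableSpace Ω] [MeasurableSpace S] [BorelSpace S]
    (hτ : ∀ i, Measurable (τ i)) (hσ : ∀ i, Measurable (σs i)) :
    Measurable (coverTimeAux τ σs) := by
  refine Measurable.iSup fun n => Measurable.iInf fun i => ?_
  exact (hτ i).add (measurable_dist.comp ((measurable_const (a := TopologicalSpace.denseSeq S n)).prodMk (hσ i)))

end Det



/-- In a compact space, the distance between two points of a preconnected finite union of
closed sets is at most the sum of the diameters. -/
lemma dist_le_sum_diam {S : Type*} [MetricSpace S] [CompactSpace S] :
    ∀ (n : ℕ) (F : Finset ℕ), F.card ≤ n → ∀ (B : ℕ → Set S),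
      (∀ i ∈ F, IsClosed (B i)) → IsPreconnected (⋃ i ∈ F, B i) →
      ∀ x y, x ∈ ⋃ i ∈ F, B i → y ∈ ⋃ i ∈ F, B i →
      dist x y ≤ ∑ i ∈ F, Metric.diam (B i) := by
  intro n
  induction n with
  | zero =>
    intro F hF B _ _ x y hx _
    rw [Finset.card_eq_zero.1 (Nat.le_zero.1 hF)] at hx
    simp at hx
  | succ n ih =>
    intro F hF B hcl hconn x y hx hy
    simp only [mem_iUnion, exists_prop] at hx
    obtain ⟨j, hjF, hxj⟩ := hx
    by_cases hyj : y ∈ B j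
    · calc dist x y ≤ Metric.diam (B j) :=
            dist_le_diam_of_mem isBounded_of_compactSpace hxj hyj
        _ ≤ ∑ i ∈ F, Metric.diam (B i) :=
            Finset.single_le_sum (fun i _ => Metric.diam_nonneg) hjF
    · set F' := F.erase j with hF'
      set W := ⋃ i ∈ F', B i with hW
      have hUeq : (⋃ i ∈ F, B i) = B j ∪ W := by
        rw [hW, hF', ← Finset.insert_erase hjF, Finset.set_biUnion_insert,
          Finset.erase_insert (Finset.notMem_erase j F)]
      have hyW : y ∈ W := by
        have := hUeq ▸ hy
        rcases this with h | h
        · exact absurd h hyj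
        · exact h
      have hclW : IsClosed W := isClosed_biUnion_finset fun i hi => hcl i (Finset.mem_of_mem_erase hi)
      have hconn' := hUeq ▸ hconn
      have hz : ((B j ∪ W) ∩ (B j ∩ W)).Nonempty := by
        refine isPreconnected_closed_iff.1 hconn' (B j) W (hcl j hjF) hclW subset_rfl
          ⟨x, mem_union_left _ hxj, hxj⟩ ⟨y, mem_union_right _ hyW, hyW⟩
      obtain ⟨z, -, hzj, hzW⟩ := hz
      simp only [hW, mem_iUnion, exists_prop] at hzW
      obtain ⟨i0, hi0F', hzi0⟩ := hzW
      set B2 : ℕ → Set S := fun i => if i = i0 then B i0 ∪ B j else B i with hB2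
      have hunion : (⋃ i ∈ F', B2 i) = ⋃ i ∈ F, B i := by
        rw [hUeq]
        ext w
        simp only [mem_iUnion, exists_prop, mem_union, hB2]
        constructor
        · rintro ⟨i, hi, hw⟩
          by_cases h : i = i0
          · rw [h, if_pos rfl] at hw
            rcases hw with h1 | h1
            · refine Or.inr ?_
              rw [hW]
              simp only [mem_iUnion, exists_prop]
              exact ⟨i0, hi0F', h1⟩
            · exact Or.inl h1
          · rw [if_neg h] at hw
            exact Or.inr (by rw [hW]; simp only [mem_iUnion, exists_prop]; exact ⟨i, hi, hw⟩)
        · rintro (h1 | h1)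
          · exact ⟨i0, hi0F', by rw [if_pos rfl]; exact Or.inr h1⟩
          · rw [hW] at h1
            simp only [mem_iUnion, exists_prop] at h1
            obtain ⟨i, hi, hw⟩ := h1
            by_cases h : i = i0
            · exact ⟨i0, hi0F', by rw [if_pos rfl]; exact Or.inl (h ▸ hw)⟩
            · exact ⟨i, hi, by rw [if_neg h]; exact hw⟩
      have hcard' : F'.card ≤ n := by
        have h1 : F'.card = F.card - 1 := Finset.card_erase_of_mem hjF
        have h2 : 0 < F.card := Finset.card_pos.2 ⟨j, hjF⟩
        omega
      have hcl2 : ∀ i ∈ F', IsClosed (B2 i) := by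
        intro i hi
        by_cases h : i = i0
        · rw [hB2]; simp only [h, if_pos rfl]
          exact ((hcl i0 (Finset.mem_of_mem_erase hi0F')).union (hcl j hjF))
        · rw [hB2]; simp only [if_neg h]
          exact hcl i (Finset.mem_of_mem_erase hi)
      have hx2 : x ∈ ⋃ i ∈ F', B2 i := by
        simp only [mem_iUnion, exists_prop]
        exact ⟨i0, hi0F', by rw [hB2]; simp only [if_pos rfl]; exact Or.inr hxj⟩
      have hy2 : y ∈ ⋃ i ∈ F', B2 i := hunion.symm ▸ hy
      have hmain := ih F' hcard' B2 hcl2 (hunion ▸ hconn) x y hx2 hy2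
      refine hmain.trans ?_
      have hi0F : i0 ∈ F := Finset.mem_of_mem_erase hi0F'
      have hsum2 : ∑ i ∈ F', Metric.diam (B2 i)
          = Metric.diam (B i0 ∪ B j) + ∑ i ∈ F'.erase i0, Metric.diam (B i) := by
        rw [← Finset.add_sum_erase _ _ hi0F']
        congr 1
        · simp [hB2]
        · refine Finset.sum_congr rfl fun i hi => ?_
          have hne : i ≠ i0 := Finset.ne_of_mem_erase hi
          rw [hB2]
          simp only [if_neg hne]
      have hsum : ∑ i ∈ F, Metric.diam (B i)
          = Metric.diam (B j) + (Metric.diam (B i0) + ∑ i ∈ F'.erase i0, Metric.diam (B i)) := by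
        rw [← Finset.add_sum_erase _ _ hjF, ← hF', ← Finset.add_sum_erase _ _ hi0F']
      rw [hsum2, hsum]
      have := Metric.diam_union' (t := B j) (s := B i0) ⟨z, hzi0, hzj⟩
      linarith

section Expo
open Real


lemma expMeasure_one_eq : expMeasure 1
    = (volume : Measure ℝ).withDensity fun x => ((exponentialPDFReal 1 x).toNNReal : ENNReal) := by
  rfl

lemma exponentialPDFReal_one (x : ℝ) :
    exponentialPDFReal 1 x = if 0 ≤ x then rexp (-x) else 0 := by
  rw [exponentialPDFReal, gammaPDFReal]
  simp [Real.Gamma_one]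

lemma smul_pdf_eq (g : ℝ → ℝ) :
    (fun x => (exponentialPDFReal 1 x).toNNReal • g x)
      = Set.indicator (Ici (0:ℝ)) (fun x => rexp (-x) * g x) := by
  funext x
  rw [NNReal.smul_def, exponentialPDFReal_one]
  by_cases h : 0 ≤ x
  · simp [h, Real.coe_toNNReal _ (le_of_lt (exp_pos (-x))), indicator_of_mem (mem_Ici.2 h)]
  · simp [h, indicator_of_notMem (fun hc => h (mem_Ici.1 hc))]

lemma measurable_pdf_nnreal : Measurable fun x => (exponentialPDFReal 1 x).toNNReal :=
  (measurable_exponentialPDFReal 1).real_toNNReal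

lemma integral_expMeasure_one (g : ℝ → ℝ) :
    ∫ x, g x ∂(expMeasure 1) = ∫ x in Ioi (0:ℝ), rexp (-x) * g x := by
  rw [expMeasure_one_eq, integral_withDensity_eq_integral_smul measurable_pdf_nnreal g,
    smul_pdf_eq, integral_indicator measurableSet_Ici, integral_Ici_eq_integral_Ioi]

lemma integrable_expMeasure_one_iff (g : ℝ → ℝ) :
    Integrable g (expMeasure 1) ↔ IntegrableOn (fun x => rexp (-x) * g x) (Ici 0) volume := by
  rw [expMeasure_one_eq, integrable_withDensity_iff_integrable_smul measurable_pdf_nnreal,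
    smul_pdf_eq, integrable_indicator_iff measurableSet_Ici]



lemma integrable_id_expMeasure_s15 : Integrable (fun x => x) (expMeasure 1) := by
  rw [integrable_expMeasure_one_iff]
  rw [integrableOn_Ici_iff_integrableOn_Ioi]
  refine (Real.GammaIntegral_convergent (by norm_num : (0:ℝ) < 2)).congr_fun ?_ measurableSet_Ioi
  intro x hx
  norm_num

lemma integral_id_expMeasure : ∫ x, x ∂(expMeasure 1) = 1 := by
  rw [integral_expMeasure_one]
  have h := Real.Gamma_eq_integral (by norm_num : (0:ℝ) < 2)
  rw [Real.Gamma_two] at h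
  rw [h]
  refine setIntegral_congr_fun measurableSet_Ioi fun x hx => ?_
  norm_num

lemma integral_exp_neg_expMeasure : ∫ x, rexp (-x) ∂(expMeasure 1) = 1/2 := by
  rw [integral_expMeasure_one]
  have h := integral_exp_neg_mul_rpow (p := 1) (b := 2) one_pos two_pos
  have h2 : ∫ x in Ioi (0:ℝ), rexp (-2 * x ^ (1:ℝ)) = ∫ x in Ioi (0:ℝ), rexp (-x) * rexp (-x) := by
    refine setIntegral_congr_fun measurableSet_Ioi fun x hx => ?_
    rw [Real.rpow_one, ← Real.exp_add]
    ring_nf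
  rw [h2] at h
  rw [h]
  norm_num [Real.Gamma_two, Real.rpow_neg_one]


end Expo

section MainProof

lemma sum_interArrival {Ω : Type*} (τ : ℕ → Ω → ℝ) (ω : Ω) :
    ∀ i, ∑ j ∈ Finset.range (i+1), interArrival τ j ω = τ i ω := by
  intro i
  induction i with
  | zero => simp [interArrival]
  | succ n ih => rw [Finset.sum_range_succ, ih]; simp [interArrival]

/-- There is an absolute constant `κ₁` such that for the standardized growth model on any
connected compact metric space, the diameter satisfies `Δ ≤ κ₁ (E C)²`. -/
theorem growth_model_diameter_le_mean_sq :
    ∃ κ₁ : ℝ, 0 < κ₁ ∧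
      ∀ (S : Type) [MetricSpace S] [CompactSpace S] [ConnectedSpace S] [Nonempty S]
        [MeasurableSpace S] [BorelSpace S]
        (Ω : Type) [MeasurableSpace Ω] (P : Measure Ω) [IsProbabilityMeasure P]
        (μ : Measure S) [IsProbabilityMeasure μ]
        (τ : ℕ → Ω → ℝ) (σs : ℕ → Ω → S),
        IsGrowthModel P μ τ σs →
          Metric.diam (Set.univ : Set S) ≤ κ₁ * (∫ ω, coverTime τ σs ω ∂P) ^ 2 := by
  refine ⟨42, by norm_num, ?_⟩
  intro S _ _ _ _ _ _ Ω _ P _ μ _ τ σs h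
  have hexpProb : IsProbabilityMeasure (expMeasure 1) := isProbabilityMeasure_expMeasure one_pos
  set m : ℝ := ∫ ω, coverTime τ σs ω ∂P with hm
  -- basic facts about the interarrival times
  have measX : ∀ j, Measurable (interArrival τ j) := by
    intro j
    cases j with
    | zero => exact h.meas_τ 0
    | succ n => exact (h.meas_τ (n+1)).sub (h.meas_τ n)
  have mapX : ∀ j, P.map (interArrival τ j) = expMeasure 1 := by
    intro j
    calc P.map (interArrival τ j)
        = ((expMeasure 1).prod μ).map Prod.fst := by
          rw [← h.dist j, Measure.map_map measurable_fst ((measX j).prodMk (h.meas_σ j))]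
          rfl
      _ = expMeasure 1 := by rw [Measure.map_fst_prod]; simp
  -- the cover time is measurable and integrable
  have hCeq : coverTime τ σs = coverTimeAux τ σs :=
    funext fun ω => coverTime_eq (h.pos ω) (h.mono ω) (h.tendsto ω)
  have measC : Measurable (coverTime τ σs) := by
    rw [hCeq]; exact measurable_coverTimeAux h.meas_τ h.meas_σ
  have hτ0C : ∀ ω, τ 0 ω ≤ coverTime τ σs ω := by
    intro ω; rw [hCeq]; exact le_coverTimeAux (h.pos ω) (h.mono ω)
  have hCub : ∀ ω, coverTime τ σs ω ≤ τ 0 ω + Metric.diam (Set.univ : Set S) := by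
    intro ω; rw [hCeq]; exact coverTimeAux_le' (h.pos ω) (h.mono ω)
  have hC_nonneg : ∀ ω, 0 ≤ coverTime τ σs ω := fun ω => le_trans (h.pos ω).le (hτ0C ω)
  have hint0 : Integrable (τ 0) P := by
    have h1 : Integrable (fun x => x) (P.map (interArrival τ 0)) := by
      rw [mapX 0]; exact integrable_id_expMeasure_s15
    exact (integrable_map_measure (g := fun x : ℝ => x) measurable_id'.aestronglyMeasurable
      (measX 0).aemeasurable).mp h1
  have intC : Integrable (coverTime τ σs) P := by
    have hintg : Integrable (fun ω => τ 0 ω + Metric.diam (Set.univ : Set S)) P := by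
      exact hint0.add (integrable_const _)
    refine Integrable.mono hintg measC.aestronglyMeasurable
      (Filter.Eventually.of_forall fun ω => ?_)
    rw [Real.norm_eq_abs, Real.norm_eq_abs, abs_of_nonneg (hC_nonneg ω)]
    have h2 : 0 ≤ τ 0 ω + Metric.diam (Set.univ : Set S) :=
      add_nonneg (h.pos ω).le Metric.diam_nonneg
    rw [abs_of_nonneg h2]
    exact hCub ω
  have hτ0int : ∫ ω, τ 0 ω ∂P = 1 := by
    have h1 : ∫ ω, τ 0 ω ∂P = ∫ x, x ∂(P.map (interArrival τ 0)) := by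
      rw [integral_map (measX 0).aemeasurable
        (f := fun x : ℝ => x) measurable_id'.aestronglyMeasurable]
      rfl
    rw [h1, mapX 0, integral_id_expMeasure]
  have hm1 : 1 ≤ m := by
    rw [hm, ← hτ0int]
    exact integral_mono hint0 intC hτ0C
  have hm0 : 0 < m := lt_of_lt_of_le one_pos hm1
  -- the number of seeds
  set k : ℕ := ⌈5*m⌉₊ + 1 with hk
  have hk1 : (5*m+1 : ℝ) ≤ k := by
    rw [hk]; push_cast
    have := Nat.le_ceil (5*m)
    linarith
  have hk2 : (k:ℝ) ≤ 7*m := by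
    rw [hk]; push_cast
    have h1 : (⌈5*m⌉₊ : ℝ) < 5*m + 1 := Nat.ceil_lt_add_one (by positivity)
    linarith
  -- Markov inequality for the cover time
  have hPA : (P {ω | 3*m ≤ coverTime τ σs ω}).toReal ≤ 1/3 := by
    have h1 := mul_meas_ge_le_integral_of_nonneg
      (Filter.Eventually.of_forall hC_nonneg) intC (3*m)
    rw [← hm] at h1
    rw [measureReal_def] at h1
    have h2 : (0:ℝ) ≤ (P {ω | 3*m ≤ coverTime τ σs ω}).toReal := ENNReal.toReal_nonneg
    nlinarith
  -- Markov inequality for the k-th arrival time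
  have hIndepX : iIndepFun
      (fun i => interArrival τ i) P :=
    h.indep.comp (fun _ => Prod.fst) (fun _ => measurable_fst)
  have hmgf1 : ∀ j, mgf (interArrival τ j) P (-1) = 1/2 := by
    intro j
    have hasm : AEStronglyMeasurable (fun x : ℝ => Real.exp (-1 * x))
        (P.map (interArrival τ j)) :=
      (Real.continuous_exp.comp (continuous_const.mul continuous_id)).aestronglyMeasurable
    calc mgf (interArrival τ j) P (-1)
        = ∫ x, Real.exp (-1 * x) ∂(P.map (interArrival τ j)) :=
          (integral_map (measX j).aemeasurable hasm).symm
      _ = ∫ x, Real.exp (-x) ∂(expMeasure 1) := by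
          rw [mapX j]; congr 1; funext x; ring_nf
      _ = 1/2 := integral_exp_neg_expMeasure
  set Sk : Ω → ℝ := fun ω => ∑ j ∈ Finset.range k, interArrival τ j ω with hSk
  have hSkτ : ∀ ω, Sk ω = τ (k-1) ω := by
    intro ω
    rw [hSk]
    have hk' : k = (k-1) + 1 := by omega
    rw [hk']
    exact sum_interArrival τ ω (k-1)
  have hmgfSk : mgf Sk P (-1) = (1/2)^k := by
    have hfun : Sk = ∑ j ∈ Finset.range k, interArrival τ j := by
      funext ω
      rw [hSk, Finset.sum_apply]
    rw [hfun, iIndepFun.mgf_sum hIndepX measX (Finset.range k)]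
    rw [Finset.prod_congr rfl fun j _ => hmgf1 j]
    simp
  have hSk_pos : ∀ ω, 0 < Sk ω := by
    intro ω
    rw [hSkτ ω]
    exact lt_of_lt_of_le (h.pos ω) ((h.mono ω).monotone (Nat.zero_le _))
  have hintSk : Integrable (fun ω => Real.exp (-1 * Sk ω)) P := by
    refine Integrable.mono (integrable_const (1:ℝ)) ?_ (Filter.Eventually.of_forall fun ω => ?_)
    · refine Measurable.aestronglyMeasurable ?_
      exact (((Finset.measurable_sum _ fun j _ => measX j).const_mul (-1)).exp)
    · rw [Real.norm_eq_abs, Real.norm_eq_abs, abs_of_nonneg (Real.exp_pos _).le]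
      rw [abs_of_nonneg (by norm_num : (0:ℝ) ≤ 1)]
      rw [Real.exp_le_one_iff]
      nlinarith [hSk_pos ω]
  have hPB : (P {ω | τ (k-1) ω ≤ 3*m}).toReal ≤ 1/2 := by
    have h1 := mul_meas_ge_le_integral_of_nonneg
      (Filter.Eventually.of_forall fun ω => (Real.exp_pos (-1 * Sk ω)).le) hintSk
      (Real.exp (-(3*m)))
    have h2 : ∫ ω, Real.exp (-1 * Sk ω) ∂P = (1/2)^k := hmgfSk
    rw [h2] at h1
    rw [measureReal_def] at h1
    have hsub : {ω | τ (k-1) ω ≤ 3*m} ⊆ {ω | Real.exp (-(3*m)) ≤ Real.exp (-1 * Sk ω)} := by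
      intro ω hω
      simp only [Set.mem_setOf_eq] at hω ⊢
      rw [Real.exp_le_exp]
      rw [← hSkτ ω] at hω
      linarith
    have h3 : (P {ω | τ (k-1) ω ≤ 3*m}).toReal
        ≤ (P {ω | Real.exp (-(3*m)) ≤ Real.exp (-1 * Sk ω)}).toReal :=
      ENNReal.toReal_mono (measure_ne_top P _) (measure_mono hsub)
    have hε : 0 < Real.exp (-(3*m)) := Real.exp_pos _
    have h4 : (P {ω | Real.exp (-(3*m)) ≤ Real.exp (-1 * Sk ω)}).toReal
        ≤ (1/2)^k * Real.exp (3*m) := by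
      calc (P {ω | Real.exp (-(3*m)) ≤ Real.exp (-1 * Sk ω)}).toReal
          ≤ (1/2)^k / Real.exp (-(3*m)) := (le_div_iff₀ hε).2 (by nlinarith [h1])
        _ = (1/2)^k * Real.exp (3*m) := by
            rw [Real.exp_neg, div_eq_mul_inv, inv_inv]
    -- numeric estimate
    have hlog : (0.6931471803 : ℝ) < Real.log 2 := Real.log_two_gt_d9
    have hnum : (1/2:ℝ)^k * Real.exp (3*m) ≤ 1/2 := by
      have e1 : ((1:ℝ)/2)^k = Real.exp (-((k:ℝ) * Real.log 2)) := by
        rw [Real.exp_neg, Real.exp_nat_mul, Real.exp_log two_pos, one_div, inv_pow]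
      rw [e1, ← Real.exp_add]
      have e2 : (1/2 : ℝ) = Real.exp (-(Real.log 2)) := by
        rw [Real.exp_neg, Real.exp_log two_pos]; norm_num
      rw [e2, Real.exp_le_exp]
      have h5 : (5*m+1) * Real.log 2 ≤ (k:ℝ) * Real.log 2 :=
        mul_le_mul_of_nonneg_right hk1 (Real.log_nonneg one_le_two)
      nlinarith
    linarith
  -- a good sample point exists
  have hgood : ∃ ω, coverTime τ σs ω < 3*m ∧ 3*m < τ (k-1) ω := by
    by_contra hcon
    push_neg at hcon
    have hsub : (Set.univ : Set Ω) ⊆ {ω | 3*m ≤ coverTime τ σs ω} ∪ {ω | τ (k-1) ω ≤ 3*m} := by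
      intro ω _
      by_cases h1 : 3*m ≤ coverTime τ σs ω
      · exact Or.inl h1
      · exact Or.inr (hcon ω (lt_of_not_ge h1))
    have h1 : (1 : ENNReal) ≤ P ({ω | 3*m ≤ coverTime τ σs ω} ∪ {ω | τ (k-1) ω ≤ 3*m}) := by
      rw [← measure_univ (μ := P)]
      exact measure_mono hsub
    have h2 := (measure_union_le (μ := P) {ω | 3*m ≤ coverTime τ σs ω} {ω | τ (k-1) ω ≤ 3*m})
    have h3 : (1:ℝ) ≤ (P {ω | 3*m ≤ coverTime τ σs ω}).toReal
        + (P {ω | τ (k-1) ω ≤ 3*m}).toReal := by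
      have h4 := ENNReal.toReal_mono ?_ (le_trans h1 h2)
      · rwa [ENNReal.toReal_one, ENNReal.toReal_add (measure_ne_top P _) (measure_ne_top P _)]
        at h4
      · exact ENNReal.add_ne_top.2 ⟨measure_ne_top P _, measure_ne_top P _⟩
    linarith
  obtain ⟨ω, hCω, hτω⟩ := hgood
  -- geometry: the space is covered by k balls of radius at most 3m
  have hcov3m : coveredSet τ σs ω (3*m) = Set.univ := by
    have h1 := covered_coverTimeAux (σs := σs) (h.pos ω) (h.mono ω) (h.tendsto ω)
    have h2 : coverTimeAux τ σs ω ≤ 3*m := by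
      have h3 := congrFun hCeq ω
      rw [← h3]
      exact hCω.le
    refine Set.eq_univ_of_univ_subset ?_
    rw [← h1]
    exact coveredSet_mono h2
  -- geometry: the space is covered by k balls of diameter at most 6m
  set B' : ℕ → Set S := fun i =>
    if τ i ω ≤ 3*m then Metric.closedBall (σs i ω) (3*m - τ i ω) else ∅ with hB'
  have hU : (⋃ i ∈ Finset.range k, B' i) = Set.univ := by
    refine Set.eq_univ_of_univ_subset ?_
    intro x _
    have hx : x ∈ coveredSet τ σs ω (3*m) := hcov3m ▸ Set.mem_univ x
    rw [mem_coveredSet] at hx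
    obtain ⟨i, hi⟩ := hx
    have hd : (0:ℝ) ≤ dist x (σs i ω) := dist_nonneg
    simp only [arrF] at hi
    have hτi : τ i ω ≤ 3*m := by linarith
    have hik : i < k := by
      by_contra hik
      push_neg at hik
      have hmono : τ (k-1) ω ≤ τ i ω := (h.mono ω).monotone (by omega)
      linarith
    simp only [Set.mem_iUnion, exists_prop]
    refine ⟨i, Finset.mem_range.2 hik, ?_⟩
    rw [hB']
    simp only [if_pos hτi, Metric.mem_closedBall]
    linarith
  have hcl : ∀ i ∈ Finset.range k, IsClosed (B' i) := by
    intro i _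
    rw [hB']
    by_cases hc : τ i ω ≤ 3*m
    · simp only [if_pos hc]; exact Metric.isClosed_closedBall
    · simp only [if_neg hc]; exact isClosed_empty
  have hdiam : ∀ i ∈ Finset.range k, Metric.diam (B' i) ≤ 6*m := by
    intro i _
    rw [hB']
    by_cases hc : τ i ω ≤ 3*m
    · simp only [if_pos hc]
      refine (Metric.diam_closedBall (sub_nonneg.2 hc)).trans ?_
      have hτpos : 0 < τ i ω := lt_of_lt_of_le (h.pos ω) ((h.mono ω).monotone (Nat.zero_le i))
      linarith
    · simp only [if_neg hc, Metric.diam_empty]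
      linarith
  have hconn : IsPreconnected (⋃ i ∈ Finset.range k, B' i) := by
    rw [hU]; exact isPreconnected_univ
  have hdist : ∀ x y : S, dist x y ≤ 42 * m^2 := by
    intro x y
    have hxy := dist_le_sum_diam k (Finset.range k) (by simp) B' hcl hconn x y
      (hU ▸ Set.mem_univ x) (hU ▸ Set.mem_univ y)
    have hsum : ∑ i ∈ Finset.range k, Metric.diam (B' i) ≤ (k:ℝ) * (6*m) := by
      calc ∑ i ∈ Finset.range k, Metric.diam (B' i)
          ≤ (Finset.range k).card • (6*m) := Finset.sum_le_card_nsmul _ _ _ hdiam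
        _ = (k:ℝ) * (6*m) := by simp [nsmul_eq_mul]
    have h7 : (k:ℝ) * (6*m) ≤ 42 * m^2 := by nlinarith
    linarith
  exact Metric.diam_le_of_forall_dist_le (by positivity) fun x _ y _ => hdist x y

end MainProof

end
end

section
/- In the standardized growth model on any compact metric space with any seed distribution μ, cov(3·E[C]) ≤ 9·E[C]; hence min_μ E_μ[C] ≥ min{r : cov(3r) ≤ 9r}. -/
open MeasureTheory ProbabilityTheory Metric Set

noncomputable section

/-- `covNum S r` is the minimum number of closed balls of radius `r` needed to cover `S`. -/
def covNum (S : Type*) [MetricSpace S] (r : ℝ) : ℕ :=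
  sInf {n : ℕ | ∃ f : Fin n → S, (Set.univ : Set S) ⊆ ⋃ i, Metric.closedBall (f i) r}

/-! ### Auxiliary lemmas -/

lemma integral_expMeasure_one_s16 (f : ℝ → ℝ) (hf : Measurable f) (h0 : ∀ x, 0 ≤ f x) :
    ∫ x, f x ∂(expMeasure 1) = ∫ x in Set.Ioi (0:ℝ), f x * Real.exp (-x) := by
  have hpdf : Measurable (exponentialPDF 1) := by
    unfold exponentialPDF exponentialPDFReal
    exact (measurable_gammaPDFReal 1 1).ennreal_ofReal
  rw [integral_eq_lintegral_of_nonneg_ae (ae_of_all _ h0) hf.aestronglyMeasurable]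
  rw [show expMeasure 1 = volume.withDensity (exponentialPDF 1) from rfl]
  rw [lintegral_withDensity_eq_lintegral_mul _ hpdf hf.ennreal_ofReal]
  have h1 : ∀ x : ℝ, (exponentialPDF 1 * fun a => ENNReal.ofReal (f a)) x
      = (Set.Ici (0:ℝ)).indicator (fun x => ENNReal.ofReal (f x * Real.exp (-x))) x := by
    intro x
    simp only [Pi.mul_apply, exponentialPDF_eq, Set.indicator_apply, Set.mem_Ici]
    split_ifs with h
    · rw [← ENNReal.ofReal_mul (by positivity)]; norm_num [mul_comm]
    · simp
  rw [lintegral_congr h1]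
  rw [lintegral_indicator measurableSet_Ici,
    setLIntegral_congr (Filter.EventuallyEq.symm Ioi_ae_eq_Ici)]
  have hm : Measurable fun x : ℝ => f x * Real.exp (-x) := by fun_prop
  rw [← integral_eq_lintegral_of_nonneg_ae
    (ae_of_all _ fun x => mul_nonneg (h0 x) (Real.exp_pos _).le) hm.aestronglyMeasurable]

lemma integral_exp_neg_expMeasure_one : ∫ x, Real.exp (-x) ∂(expMeasure 1) = 1/2 := by
  rw [integral_expMeasure_one_s16 (fun x => Real.exp (-x))
    (Real.measurable_exp.comp measurable_neg) (fun x => (Real.exp_pos _).le)]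
  have h : ∀ x : ℝ, Real.exp (-x) * Real.exp (-x) = Real.exp (-(2*x)) := by
    intro x; rw [← Real.exp_add]; ring_nf
  simp_rw [h]
  have := integral_comp_mul_left_Ioi (fun x => Real.exp (-x)) 0 (by norm_num : (0:ℝ) < 2)
  simp only [mul_zero] at this
  rw [this, integral_exp_neg_Ioi_zero, smul_eq_mul, mul_one]
  norm_num

lemma integral_max_expMeasure_one : ∫ x, max x 0 ∂(expMeasure 1) = 1 := by
  rw [integral_expMeasure_one_s16 (fun x => max x 0)
    (measurable_id.max measurable_const) (fun x => le_max_right _ _)]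
  have hg : Real.Gamma 2 = 1 := by
    rw [show (2:ℝ) = ((1:ℕ)+1) by norm_num, Real.Gamma_nat_eq_factorial]; simp
  rw [Real.Gamma_eq_integral (by norm_num : (0:ℝ) < 2)] at hg
  rw [← hg]
  refine setIntegral_congr_fun measurableSet_Ioi (fun x hx => ?_)
  rw [max_eq_left (le_of_lt hx), mul_comm, show (2:ℝ)-1 = 1 by norm_num, Real.rpow_one]

section Model

variable {S : Type*} [MetricSpace S] [CompactSpace S] [Nonempty S] {Ω : Type*}
  {τ : ℕ → Ω → ℝ} {σs : ℕ → Ω → S}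

omit [Nonempty S] in
lemma coverSet_mem {ω : Ω} (hpos : 0 < τ 0 ω) :
    (τ 0 ω + Metric.diam (Set.univ : Set S))
      ∈ {t : ℝ | 0 ≤ t ∧ coveredSet τ σs ω t = Set.univ} := by
  have hd : 0 ≤ Metric.diam (Set.univ : Set S) := Metric.diam_nonneg
  constructor
  · linarith
  · refine Set.eq_univ_iff_forall.2 fun x => ?_
    refine Set.mem_biUnion (show τ 0 ω ≤ τ 0 ω + Metric.diam (Set.univ : Set S) by linarith) ?_
    rw [Metric.mem_closedBall]
    have : dist x (σs 0 ω) ≤ Metric.diam (Set.univ : Set S) :=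
      Metric.dist_le_diam_of_mem isCompact_univ.isBounded (Set.mem_univ _) (Set.mem_univ _)
    linarith

lemma tau0_le_coverTime {ω : Ω} (hpos : 0 < τ 0 ω) (hmono : StrictMono fun i => τ i ω) :
    τ 0 ω ≤ coverTime τ σs ω := by
  refine le_csInf ⟨_, coverSet_mem hpos⟩ fun t ht => ?_
  obtain ⟨ht0, hcov⟩ := ht
  have hx : (Classical.arbitrary S) ∈ coveredSet τ σs ω t := hcov ▸ Set.mem_univ _
  rw [coveredSet, Set.mem_iUnion₂] at hx
  obtain ⟨i, hi, -⟩ := hx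
  exact le_trans (hmono.monotone (Nat.zero_le i)) hi

end Model

/-- In the standardized growth model with any seed distribution `μ`,
`cov(3 E C) ≤ 9 E C`; hence `min_μ E_μ C ≥ min {r : cov(3r) ≤ 9r}`. -/
theorem growth_model_covering_lower_bound
    {S : Type*} [MetricSpace S] [CompactSpace S] [Nonempty S]
    [MeasurableSpace S] [BorelSpace S]
    {Ω : Type*} [MeasurableSpace Ω] (P : Measure Ω) [IsProbabilityMeasure P]
    (μ : Measure S) [IsProbabilityMeasure μ]
    (τ : ℕ → Ω → ℝ) (σs : ℕ → Ω → S)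
    (hmodel : IsGrowthModel P μ τ σs)
    (hint : Integrable (coverTime τ σs) P) :
    (covNum S (3 * ∫ ω, coverTime τ σs ω ∂P) : ℝ) ≤ 9 * ∫ ω, coverTime τ σs ω ∂P := by
  obtain ⟨meas_τ, meas_σ, hpos, hmono, -, hdist, hindep⟩ := hmodel
  set m := ∫ ω, coverTime τ σs ω ∂P with hm
  set C := coverTime τ σs with hC
  -- basic facts about interarrival times
  have hXmeas : ∀ i, Measurable (interArrival τ i) := by
    intro i; cases i with
    | zero => exact meas_τ 0
    | succ n => exact (meas_τ (n+1)).sub (meas_τ n)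
  have hpair : ∀ i, Measurable fun ω => (interArrival τ i ω, σs i ω) :=
    fun i => (hXmeas i).prodMk (meas_σ i)
  have hXlaw : ∀ i, P.map (interArrival τ i) = expMeasure 1 := by
    intro i
    have h2 : P.map (interArrival τ i)
        = (P.map fun ω => (interArrival τ i ω, σs i ω)).map Prod.fst := by
      rw [Measure.map_map measurable_fst (hpair i)]; rfl
    rw [h2, hdist i, Measure.map_fst_prod, measure_univ, one_smul]
  -- mgf of each interarrival
  have hmgfX : ∀ i, mgf (interArrival τ i) P (-1) = 1/2 := by
    intro i
    have h1 : mgf (interArrival τ i) P (-1)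
        = ∫ x, Real.exp (-x) ∂(P.map (interArrival τ i)) := by
      rw [mgf, integral_map (hXmeas i).aemeasurable
        (Measurable.aestronglyMeasurable (by fun_prop))]
      simp [neg_one_mul]
    rw [h1, hXlaw i, integral_exp_neg_expMeasure_one]
  -- sum of interarrivals telescopes
  have hτsum : ∀ k, (∑ i ∈ Finset.range (k+1), interArrival τ i) = τ k := by
    intro k
    funext ω
    rw [Finset.sum_apply]
    induction k with
    | zero => simp [interArrival]
    | succ n ih => rw [Finset.sum_range_succ, ih]; simp [interArrival]
  have hiIndepX : iIndepFun (interArrival τ) P := by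
    have := hindep.comp (fun _ => Prod.fst) (fun _ => measurable_fst)
    exact this
  -- τ k is nonneg
  have hτ0k : ∀ k ω, 0 < τ k ω := fun k ω =>
    lt_of_lt_of_le (hpos ω) ((hmono ω).monotone (Nat.zero_le k))
  have hmgfτ : ∀ k, mgf (τ k) P (-1) = (1/2)^(k+1) := by
    intro k
    rw [← hτsum k, hiIndepX.mgf_sum hXmeas (Finset.range (k+1))]
    simp [hmgfX, Finset.prod_const]
  -- Chernoff bound
  have hchern : ∀ k (ε : ℝ), (P {ω | τ k ω ≤ ε}).toReal
      ≤ Real.exp ε * (1/2)^(k+1) := by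
    intro k ε
    have hint_exp : Integrable (fun ω => Real.exp (-1 * τ k ω)) P := by
      refine Integrable.mono' (integrable_const 1)
        (Measurable.aestronglyMeasurable (by fun_prop)) (ae_of_all _ fun ω => ?_)
      rw [Real.norm_eq_abs, abs_of_pos (Real.exp_pos _)]
      exact Real.exp_le_one_iff.2 (by nlinarith [hτ0k k ω])
    have := measure_le_le_exp_mul_mgf (X := τ k) (μ := P) ε (by norm_num : (-1:ℝ) ≤ 0) hint_exp
    rw [hmgfτ k] at this
    simpa [measureReal_def] using this
  -- the mean is at least 1
  have hτ0C : ∀ ω, τ 0 ω ≤ C ω := fun ω => tau0_le_coverTime (hpos ω) (hmono ω)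
  have hCpos : ∀ ω, 0 < C ω := fun ω => lt_of_lt_of_le (hpos ω) (hτ0C ω)
  have hint0 : Integrable (τ 0) P := by
    refine hint.mono' (meas_τ 0).aestronglyMeasurable (ae_of_all _ fun ω => ?_)
    rw [Real.norm_eq_abs, abs_of_pos (hpos ω)]
    exact hτ0C ω
  have hEτ0 : ∫ ω, τ 0 ω ∂P = 1 := by
    have h1 : ∫ ω, τ 0 ω ∂P = ∫ ω, max (τ 0 ω) 0 ∂P := by
      refine integral_congr_ae (ae_of_all _ fun ω => ?_)
      exact (max_eq_left (hpos ω).le).symm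
    have h2 : ∫ ω, max (τ 0 ω) 0 ∂P = ∫ x, max x 0 ∂(P.map (τ 0)) := by
      rw [integral_map (meas_τ 0).aemeasurable
        (Measurable.aestronglyMeasurable (by fun_prop))]
    have h3 : P.map (τ 0) = expMeasure 1 := hXlaw 0
    rw [h1, h2, h3, integral_max_expMeasure_one]
  have hm1 : 1 ≤ m := by
    rw [← hEτ0, hm]
    exact integral_mono hint0 hint hτ0C
  -- Markov for the cover time
  have hmarkov : (P {ω | 3*m ≤ C ω}).toReal ≤ 1/3 := by
    have h := mul_meas_ge_le_integral_of_nonneg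
      (ae_of_all _ fun ω => (hCpos ω).le) hint (3*m)
    rw [← hm, measureReal_def] at h
    nlinarith [ENNReal.toReal_nonneg (a := P {ω | 3*m ≤ C ω})]
  set k := ⌊9*m⌋₊ with hk
  have hk9 : (9:ℝ)*m < k + 1 := Nat.lt_floor_add_one _
  have hk_le : (k:ℝ) ≤ 9*m := Nat.floor_le (by nlinarith)
  -- bound the Chernoff term
  have hlog2 : (0.6931471803:ℝ) < Real.log 2 := Real.log_two_gt_d9
  have hBbound : Real.exp (3*m) * ((1:ℝ)/2)^(k+1) < 1/2 := by
    have hhalf : ((1:ℝ)/2)^(k+1) = Real.exp (-(((k:ℝ)+1) * Real.log 2)) := by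
      have h12 : ((1:ℝ)/2) = Real.exp (-Real.log 2) := by
        rw [Real.exp_neg, Real.exp_log (by norm_num : (0:ℝ) < 2)]; norm_num
      rw [h12, ← Real.exp_nat_mul]
      congr 1
      push_cast
      ring
    rw [hhalf, ← Real.exp_add]
    have h1 : 3*m + -((↑k+1) * Real.log 2) ≤ -1 := by nlinarith
    calc Real.exp (3*m + -((↑k+1) * Real.log 2)) ≤ Real.exp (-1) := Real.exp_le_exp.2 h1
      _ < 1/2 := by
        rw [Real.exp_neg]
        have h2 : (2:ℝ) < Real.exp 1 := by have := Real.exp_one_gt_d9; linarith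
        have hx : Real.exp 1 * (Real.exp 1)⁻¹ = 1 := mul_inv_cancel₀ (Real.exp_pos 1).ne'
        nlinarith [inv_pos.2 (Real.exp_pos 1)]
  have hB : (P {ω | τ k ω ≤ 3*m}).toReal < 1/2 :=
    lt_of_le_of_lt (hchern k (3*m)) hBbound
  -- find a good sample point
  have hexists : ∃ ω, C ω < 3*m ∧ 3*m < τ k ω := by
    by_contra hcon
    push_neg at hcon
    have hsub : (Set.univ : Set Ω) ⊆ {ω | 3*m ≤ C ω} ∪ {ω | τ k ω ≤ 3*m} := by
      intro ω _
      rcases le_or_gt (3*m) (C ω) with h | h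
      · exact Or.inl h
      · exact Or.inr (hcon ω h)
    have h1 : (1:ENNReal) ≤ P {ω | 3*m ≤ C ω} + P {ω | τ k ω ≤ 3*m} := by
      calc (1:ENNReal) = P Set.univ := (measure_univ).symm
        _ ≤ P ({ω | 3*m ≤ C ω} ∪ {ω | τ k ω ≤ 3*m}) := measure_mono hsub
        _ ≤ _ := measure_union_le _ _
    have h2 : (1:ℝ) ≤ (P {ω | 3*m ≤ C ω}).toReal + (P {ω | τ k ω ≤ 3*m}).toReal := by
      have := ENNReal.toReal_mono (by finiteness) h1
      rwa [ENNReal.toReal_one, ENNReal.toReal_add (by finiteness) (by finiteness)] at this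
    linarith
  obtain ⟨ω, hCω, hτω⟩ := hexists
  -- extract a covering time below 3m
  have hTne : {t : ℝ | 0 ≤ t ∧ coveredSet τ σs ω t = Set.univ}.Nonempty :=
    ⟨_, coverSet_mem (hpos ω)⟩
  have hex_t : ∃ t ∈ {t : ℝ | 0 ≤ t ∧ coveredSet τ σs ω t = Set.univ}, t < 3*m := by
    by_contra hcon
    push_neg at hcon
    have : 3*m ≤ C ω := le_csInf hTne hcon
    linarith
  obtain ⟨t, ⟨ht0, hcov⟩, htlt⟩ := hex_t
  -- build the covering
  have hcover : (Set.univ : Set S) ⊆ ⋃ i : Fin k, Metric.closedBall (σs (i:ℕ) ω) (3*m) := by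
    intro x _
    have hx : x ∈ coveredSet τ σs ω t := hcov ▸ Set.mem_univ x
    rw [coveredSet, Set.mem_iUnion₂] at hx
    obtain ⟨i, hi, hxi⟩ := hx
    have hi' : τ i ω ≤ t := hi
    have hik : i < k := by
      have h1 : τ i ω < τ k ω := lt_of_le_of_lt hi' (lt_trans htlt hτω)
      exact (hmono ω).lt_iff_lt.mp h1
    refine Set.mem_iUnion.2 ⟨⟨i, hik⟩, ?_⟩
    rw [Metric.mem_closedBall]
    rw [Metric.mem_closedBall] at hxi
    have := hτ0k i ω
    calc dist x (σs i ω) ≤ t - τ i ω := hxi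
      _ ≤ 3*m := by linarith
  have hcovk : covNum S (3*m) ≤ k := Nat.sInf_le ⟨fun i => σs (i:ℕ) ω, hcover⟩
  have hfinal : (covNum S (3*m) : ℝ) ≤ (k:ℝ) := by exact_mod_cast hcovk
  exact le_trans hfinal hk_le
end
end

section
/- Example (growth model on a segment with atomic seed distribution): Let S = [0,n] with seed distribution μ(0) = 1 − 1/n, μ(n) = 1/n, in the standardized growth model. Then n⁻¹·C⁽ⁿ⁾ converges in distribution as n → ∞ to min(1, (1+ξ)/2), where ξ is Exponential(1). -/
open MeasureTheory ProbabilityTheory Metric Set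

noncomputable section

open scoped ENNReal

/-- The time for the growth process on the line to cover the segment `[0, n]`. -/
def segmentCoverTime {Ω : Type*} (n : ℕ) (τ : ℕ → Ω → ℝ) (σs : ℕ → Ω → ℝ) (ω : Ω) : ℝ :=
  sInf {t : ℝ | 0 ≤ t ∧ Set.Icc (0:ℝ) n ⊆ coveredSet τ σs ω t}

/-- The seed distribution on `[0,n] ⊆ ℝ` putting mass `1 − 1/n` at `0` and `1/n` at `n`. -/
def segSeedMeasure (n : ℕ) : Measure ℝ :=
  ((1 : ℝ≥0∞) - (n : ℝ≥0∞)⁻¹) • Measure.dirac (0:ℝ) +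
    (n : ℝ≥0∞)⁻¹ • Measure.dirac (n : ℝ)

set_option linter.unusedSectionVars false
set_option maxHeartbeats 1000000
section AuxSegGrowth

namespace SegGrowth

/-- Tail function of the Gamma(k+1,1) distribution. -/
def gam (k : ℕ) (s : ℝ) : ℝ :=
  if 0 ≤ s then Real.exp (-s) * ∑ j ∈ Finset.range (k+1), s^j / (Nat.factorial j) else 1

lemma gam_nonneg (k : ℕ) (s : ℝ) : 0 ≤ gam k s := by
  unfold gam
  split_ifs with h
  · refine mul_nonneg (Real.exp_nonneg _) (Finset.sum_nonneg fun j _ => ?_)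
    positivity
  · norm_num

lemma sum_pow_div_factorial_le {s : ℝ} (hs : 0 ≤ s) (m : ℕ) :
    ∑ j ∈ Finset.range m, s^j / (Nat.factorial j) ≤ Real.exp s := by
  have hsum := Real.summable_pow_div_factorial s
  have h1 : ∑ j ∈ Finset.range m, s^j / (Nat.factorial j) ≤ ∑' j : ℕ, s^j / (Nat.factorial j) := by
    refine Summable.sum_le_tsum _ (fun j _ => by positivity) hsum
  refine h1.trans_eq ?_
  rw [Real.exp_eq_exp_ℝ, NormedSpace.exp_eq_tsum_div]

lemma gam_le_one (k : ℕ) (s : ℝ) : gam k s ≤ 1 := by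
  unfold gam
  split_ifs with h
  · rw [Real.exp_neg]
    rw [inv_mul_le_iff₀ (Real.exp_pos _)]
    simpa using sum_pow_div_factorial_le h (k+1)
  · exact le_refl 1

lemma measurable_gam (k : ℕ) : Measurable (gam k) := by
  unfold gam
  refine Measurable.ite measurableSet_Ici ?_ measurable_const
  exact ((Real.continuous_exp.comp continuous_neg).mul (by fun_prop)).measurable

lemma exponentialPDF_eq_gammaPDF (r : ℝ) : exponentialPDF r = gammaPDF 1 r := by
  funext x; rfl

lemma expMeasure_apply_Iic {r : ℝ} (hr : 0 < r) (x : ℝ) :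
    expMeasure r (Iic x) = ENNReal.ofReal (if 0 ≤ x then 1 - Real.exp (-(r * x)) else 0) := by
  rw [expMeasure, gammaMeasure, withDensity_apply _ measurableSet_Iic,
    ← exponentialPDF_eq_gammaPDF, lintegral_exponentialPDF_eq_antiDeriv hr x]

lemma expMeasure_apply_Ioi {r : ℝ} (hr : 0 < r) (x : ℝ) :
    expMeasure r (Ioi x) = if 0 ≤ x then ENNReal.ofReal (Real.exp (-(r * x))) else 1 := by
  haveI := isProbabilityMeasure_expMeasure hr
  have h : Ioi x = (Iic x)ᶜ := by simp
  rw [h, measure_compl measurableSet_Iic (measure_ne_top _ _), measure_univ,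
    expMeasure_apply_Iic hr]
  split_ifs with hx
  · have hle : Real.exp (-(r * x)) ≤ 1 := by
      rw [Real.exp_le_one_iff]
      nlinarith
    rw [← ENNReal.ofReal_one, ← ENNReal.ofReal_sub _ (by linarith)]
    congr 1
    ring
  · simp

lemma expMeasure_Ioi_of_nonneg {r : ℝ} (hr : 0 < r) {x : ℝ} (hx : 0 ≤ x) :
    expMeasure r (Ioi x) = ENNReal.ofReal (Real.exp (-(r * x))) := by
  rw [expMeasure_apply_Ioi hr, if_pos hx]


/-- The distribution of the sum of `k+1` i.i.d. Exponential(1) random variables. -/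
def rho : ℕ → Measure ℝ
  | 0 => expMeasure 1
  | (k+1) => ((expMeasure 1).prod (rho k)).map (fun p => p.1 + p.2)

instance rho_prob (k : ℕ) : IsProbabilityMeasure (rho k) := by
  induction k with
  | zero => exact isProbabilityMeasure_expMeasure one_pos
  | succ k ih =>
    rw [rho]
    haveI := ih
    haveI : IsProbabilityMeasure (expMeasure 1) := isProbabilityMeasure_expMeasure one_pos
    exact Measure.isProbabilityMeasure_map (by fun_prop)

lemma rho_succ_apply (k : ℕ) {B : Set ℝ} (hB : MeasurableSet B) :
    rho (k+1) B = ∫⁻ x, rho k {t | x + t ∈ B} ∂(expMeasure 1) := by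
  rw [rho, Measure.map_apply (by fun_prop) hB,
    Measure.prod_apply (measurable_add hB : MeasurableSet ((fun p : ℝ × ℝ => p.1 + p.2) ⁻¹' B))]
  rfl

lemma exp_neg_integrableOn_Ici : IntegrableOn (fun x : ℝ => Real.exp (-x)) (Ici 0) := by
  rw [integrableOn_Ici_iff_integrableOn_Ioi]
  simpa using exp_neg_integrableOn_Ioi (0:ℝ) one_pos

lemma rho_Ioi (k : ℕ) (s : ℝ) : rho k (Ioi s) = ENNReal.ofReal (gam k s) := by
  induction k generalizing s with
  | zero =>
    show expMeasure 1 (Ioi s) = _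
    rw [expMeasure_apply_Ioi one_pos]
    unfold gam
    split_ifs with h
    · simp
    · simp
  | succ k ih =>
    set g : ℝ → ℝ := fun x => Real.exp (-x) * gam k (s - x) with hg
    have hgmeas : Measurable g :=
      ((Real.continuous_exp.comp continuous_neg).measurable).mul
        ((measurable_gam k).comp (measurable_const.sub measurable_id))
    have hgnonneg : ∀ x, 0 ≤ g x := fun x =>
      mul_nonneg (Real.exp_nonneg _) (gam_nonneg _ _)
    have hgbound : ∀ x, g x ≤ Real.exp (-x) := fun x => by
      have := gam_le_one k (s - x)
      exact mul_le_of_le_one_right (Real.exp_nonneg _) this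
    have hgint : IntegrableOn g (Ici 0) := by
      refine Integrable.mono' exp_neg_integrableOn_Ici hgmeas.aestronglyMeasurable.restrict ?_
      exact ae_of_all _ fun x => by
        rw [Real.norm_eq_abs, abs_of_nonneg (hgnonneg x)]; exact hgbound x
    have key : rho (k+1) (Ioi s) = ENNReal.ofReal (∫ x in Ici 0, g x) := by
      rw [rho_succ_apply k measurableSet_Ioi]
      have hslice : ∀ x : ℝ, {t : ℝ | x + t ∈ Ioi s} = Ioi (s - x) := by
        intro x; ext t
        simp only [mem_setOf_eq, mem_Ioi]
        exact ⟨fun h => by linarith, fun h => by linarith⟩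
      calc ∫⁻ x, rho k {t | x + t ∈ Ioi s} ∂(expMeasure 1)
          = ∫⁻ x, ENNReal.ofReal (gam k (s - x)) ∂(expMeasure 1) := by
            refine lintegral_congr fun x => by rw [hslice x, ih]
        _ = ∫⁻ x, exponentialPDF 1 x * ENNReal.ofReal (gam k (s - x)) := by
            have hpdf : Measurable (gammaPDF 1 1) := (measurable_gammaPDFReal 1 1).ennreal_ofReal
            have hG : Measurable fun x : ℝ => ENNReal.ofReal (gam k (s - x)) :=
              ((measurable_gam k).comp (measurable_const.sub measurable_id)).ennreal_ofReal
            rw [expMeasure, gammaMeasure, lintegral_withDensity_eq_lintegral_mul _ hpdf hG]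
            rfl
        _ = ∫⁻ x, ENNReal.ofReal ((Ici (0:ℝ)).indicator g x) := by
            refine lintegral_congr fun x => ?_
            rw [exponentialPDF_eq]
            rw [← ENNReal.ofReal_mul (by split_ifs with h; positivity; simp)]
            congr 1
            by_cases h : (0:ℝ) ≤ x
            · rw [if_pos h, indicator_of_mem (mem_Ici.mpr h)]; simp [hg]
            · rw [if_neg h, indicator_of_notMem (by simpa using h)]; simp
        _ = ENNReal.ofReal (∫ x, (Ici (0:ℝ)).indicator g x) := by
            rw [← ofReal_integral_eq_lintegral_ofReal]
            · exact hgint.integrable_indicator measurableSet_Ici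
            · exact ae_of_all _ fun x => indicator_nonneg (fun y _ => hgnonneg y) x
        _ = ENNReal.ofReal (∫ x in Ici 0, g x) := by rw [integral_indicator measurableSet_Ici]
    rw [key]
    congr 1
    -- now the real computation
    by_cases hs : (0:ℝ) ≤ s
    · have hsplit : Ici (0:ℝ) = Icc 0 s ∪ Ioi s := by
        ext x; simp only [mem_Ici, mem_union, mem_Icc, mem_Ioi]
        constructor
        · intro hx; rcases le_or_gt x s with h | h
          · exact Or.inl ⟨hx, h⟩
          · exact Or.inr h
        · rintro (⟨h, _⟩ | h) <;> [exact h; linarith]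
      have hdisj : Disjoint (Icc (0:ℝ) s) (Ioi s) := by
        rw [Set.disjoint_left]; rintro x ⟨_, hx2⟩ hx3; exact absurd hx3 (not_lt.mpr hx2)
      rw [hsplit, setIntegral_union hdisj measurableSet_Ioi
        (hgint.mono_set (hsplit ▸ subset_union_left))
        (hgint.mono_set (hsplit ▸ subset_union_right))]
      have h1 : ∫ x in Icc (0:ℝ) s, g x
          = Real.exp (-s) * ∑ j ∈ Finset.range (k+1), s^(j+1) / (Nat.factorial (j+1)) := by
        have : ∀ x ∈ Icc (0:ℝ) s, g x
            = Real.exp (-s) * ∑ j ∈ Finset.range (k+1), (s-x)^j / (Nat.factorial j) := by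
          rintro x ⟨hx0, hxs⟩
          rw [hg]
          simp only
          rw [gam, if_pos (by linarith)]
          rw [← mul_assoc, ← Real.exp_add]
          ring_nf
        rw [setIntegral_congr_fun measurableSet_Icc this, integral_const_mul]
        congr 1
        rw [integral_Icc_eq_integral_Ioc, ← intervalIntegral.integral_of_le hs]
        rw [intervalIntegral.integral_finset_sum]
        · refine Finset.sum_congr rfl fun j _ => ?_
          have : ∀ x : ℝ, (s - x)^j / (Nat.factorial j) = (fun y : ℝ => y ^ j / (Nat.factorial j)) (s - x) := fun x => rfl
          rw [intervalIntegral.integral_comp_sub_left (fun y : ℝ => y ^ j / (Nat.factorial j)) s]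
          simp only [sub_zero, sub_self]
          rw [intervalIntegral.integral_div, integral_pow]
          rw [Nat.factorial_succ]
          push_cast
          field_simp
          try ring
        · intro j _
          exact (Continuous.intervalIntegrable (by fun_prop) _ _)
      have h2 : ∫ x in Ioi s, g x = Real.exp (-s) := by
        have : ∀ x ∈ Ioi (s:ℝ), g x = Real.exp (-x) := by
          intro x hx
          rw [hg]; simp only
          rw [gam, if_neg (by simp only [mem_Ioi] at hx; linarith)]
          ring
        rw [setIntegral_congr_fun measurableSet_Ioi this, integral_exp_neg_Ioi]
      rw [h1, h2, gam, if_pos hs, Finset.sum_range_succ' (fun j => s^j / (Nat.factorial j)) (k+1)]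
      simp [Nat.factorial]
      ring
    · -- s < 0 : integral is 1
      have : ∀ x ∈ Ici (0:ℝ), g x = Real.exp (-x) := by
        intro x hx
        rw [hg]; simp only
        rw [gam, if_neg (by simp only [mem_Ici] at hx; linarith)]
        ring
      rw [setIntegral_congr_fun measurableSet_Ici this, integral_Ici_eq_integral_Ioi,
        integral_exp_neg_Ioi, gam, if_neg hs]
      simp



section Model

variable {Ω : Type*} [MeasurableSpace Ω] {P : Measure Ω} [IsProbabilityMeasure P]
  {n : ℕ} {τs σs : ℕ → Ω → ℝ}

lemma segSeed_prob (hn : 1 ≤ n) : IsProbabilityMeasure (segSeedMeasure n) := by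
  constructor
  have h1 : ((n:ℝ≥0∞))⁻¹ ≤ 1 := by
    rw [ENNReal.inv_le_one]
    exact_mod_cast hn
  simp [segSeedMeasure, tsub_add_cancel_of_le h1]

lemma segSeed_singleton_n (hn : 1 ≤ n) : segSeedMeasure n {(n:ℝ)} = (n : ℝ≥0∞)⁻¹ := by
  have h0 : (0:ℝ) ∉ ({(n:ℝ)} : Set ℝ) := by
    simp only [mem_singleton_iff]
    have : (1:ℝ) ≤ n := by exact_mod_cast hn
    intro h; rw [← h] at this; linarith
  simp [segSeedMeasure, Measure.dirac_apply, indicator_of_notMem h0]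

lemma segSeed_compl_n (hn : 1 ≤ n) : segSeedMeasure n ({(n:ℝ)}ᶜ) = 1 - (n : ℝ≥0∞)⁻¹ := by
  have h0 : (0:ℝ) ∈ ({(n:ℝ)} : Set ℝ)ᶜ := by
    simp only [mem_compl_iff, mem_singleton_iff]
    have : (1:ℝ) ≤ n := by exact_mod_cast hn
    intro h; rw [← h] at this; linarith
  simp [segSeedMeasure, Measure.dirac_apply, indicator_of_mem h0]

lemma segSeed_singleton_zero (hn : 1 ≤ n) : segSeedMeasure n {(0:ℝ)} = 1 - (n : ℝ≥0∞)⁻¹ := by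
  have h0 : (n:ℝ) ∉ ({(0:ℝ)} : Set ℝ) := by
    simp only [mem_singleton_iff]
    have : (1:ℝ) ≤ n := by exact_mod_cast hn
    intro h; rw [h] at this; linarith
  simp [segSeedMeasure, Measure.dirac_apply, indicator_of_notMem h0]

lemma segSeed_compl_zero (hn : 1 ≤ n) : segSeedMeasure n ({(0:ℝ)}ᶜ) = (n : ℝ≥0∞)⁻¹ := by
  have h0 : (n:ℝ) ∈ ({(0:ℝ)} : Set ℝ)ᶜ := by
    simp only [mem_compl_iff, mem_singleton_iff]
    have : (1:ℝ) ≤ n := by exact_mod_cast hn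
    intro h; rw [h] at this; linarith
  simp [segSeedMeasure, Measure.dirac_apply, indicator_of_mem h0]

lemma segSeed_pair_compl : segSeedMeasure n ({0, (n:ℝ)}ᶜ) = 0 := by
  simp [segSeedMeasure, Measure.dirac_apply]

variable (M : IsGrowthModel P (segSeedMeasure n) τs σs)

section Basic
include M

lemma meas_X (i : ℕ) : Measurable (interArrival τs i) := by
  cases i with
  | zero => exact M.meas_τ 0
  | succ i => exact (M.meas_τ (i+1)).sub (M.meas_τ i)

lemma meas_pair (i : ℕ) : Measurable (fun ω => (interArrival τs i ω, σs i ω)) :=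
  (meas_X M i).prodMk (M.meas_σ i)

lemma τ_eq_sum (k : ℕ) (ω : Ω) : τs k ω = ∑ i ∈ Finset.range (k+1), interArrival τs i ω := by
  induction k with
  | zero => simp [interArrival]
  | succ k ih =>
    rw [Finset.sum_range_succ, ← ih]
    show τs (k+1) ω = τs k ω + (τs (k+1) ω - τs k ω)
    ring

lemma τ_pos (k : ℕ) (ω : Ω) : 0 < τs k ω :=
  lt_of_lt_of_le (M.pos ω) ((M.mono ω).monotone (Nat.zero_le k))

lemma law_X (hn : 1 ≤ n) (i : ℕ) : P.map (interArrival τs i) = expMeasure 1 := by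
  haveI := segSeed_prob hn
  have : interArrival τs i = Prod.fst ∘ (fun ω => (interArrival τs i ω, σs i ω)) := rfl
  rw [this, ← Measure.map_map measurable_fst (meas_pair M i), M.dist i, Measure.map_fst_prod]
  simp

lemma law_σ (hn : 1 ≤ n) (i : ℕ) : P.map (σs i) = segSeedMeasure n := by
  haveI : IsProbabilityMeasure (expMeasure 1) := isProbabilityMeasure_expMeasure one_pos
  haveI := segSeed_prob (n := n) hn
  have : σs i = Prod.snd ∘ (fun ω => (interArrival τs i ω, σs i ω)) := rfl
  rw [this, ← Measure.map_map measurable_snd (meas_pair M i), M.dist i, Measure.map_snd_prod]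
  simp

lemma P_σ_preimage (hn : 1 ≤ n) (i : ℕ) {B : Set ℝ} (hB : MeasurableSet B) :
    P (σs i ⁻¹' B) = segSeedMeasure n B := by
  rw [← Measure.map_apply (M.meas_σ i) hB, law_σ M hn i]

lemma P_X_gt (hn : 1 ≤ n) (i : ℕ) {u : ℝ} (hu : 0 ≤ u) :
    P {ω | u < interArrival τs i ω} = ENNReal.ofReal (Real.exp (-u)) := by
  have : {ω | u < interArrival τs i ω} = interArrival τs i ⁻¹' (Ioi u) := rfl
  rw [this, ← Measure.map_apply (meas_X M i) measurableSet_Ioi, law_X M hn i,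
    expMeasure_Ioi_of_nonneg one_pos hu]
  norm_num

lemma σ_indep : iIndepFun σs P := by
  have := M.indep.comp (fun _ => Prod.snd) (fun _ => measurable_snd)
  exact this

end Basic

/-- The event that none of the first `k` seeds is at position `n`. -/
def Gset (σs : ℕ → Ω → ℝ) (n k : ℕ) : Set Ω := {ω | ∀ i < k, σs i ω ≠ (n:ℝ)}

lemma Gset_eq (k : ℕ) : Gset σs n k = ⋂ i ∈ Finset.range k, σs i ⁻¹' ({(n:ℝ)}ᶜ) := by
  ext ω
  simp [Gset]

include M in
lemma meas_Gset (k : ℕ) : MeasurableSet (Gset σs n k) := by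
  rw [Gset_eq]
  exact MeasurableSet.biInter (Finset.range k).countable_toSet
    (fun i _ => (M.meas_σ i) (measurableSet_singleton _).compl)

include M in
/-- Key induction: joint law of the no-`n`-seed-so-far event, the current seed position and the
current arrival time. -/
lemma claim (hn : 1 ≤ n) (k : ℕ) {C B : Set ℝ} (hC : MeasurableSet C) (hB : MeasurableSet B) :
    P (Gset σs n k ∩ σs k ⁻¹' C ∩ τs k ⁻¹' B)
      = (1 - (n : ℝ≥0∞)⁻¹)^k * segSeedMeasure n C * rho k B := by
  haveI : IsProbabilityMeasure (expMeasure 1) := isProbabilityMeasure_expMeasure one_pos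
  haveI := segSeed_prob hn
  induction k generalizing C B with
  | zero =>
    have h1 : Gset σs n 0 = univ := by ext ω; simp [Gset]
    have h2 : τs 0 = interArrival τs 0 := rfl
    have h3 : univ ∩ σs 0 ⁻¹' C ∩ interArrival τs 0 ⁻¹' B
        = (fun ω => (interArrival τs 0 ω, σs 0 ω)) ⁻¹' (B ×ˢ C) := by
      ext ω; simp [mem_prod, and_comm]
    rw [h1, h2, h3, ← Measure.map_apply (meas_pair M 0) (hB.prod hC), M.dist 0,
      Measure.prod_prod]
    show expMeasure 1 B * segSeedMeasure n C = _
    rw [pow_zero, one_mul, mul_comm]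
    rfl
  | succ k ih =>
    set nr : ℝ := (n:ℝ) with hnr
    set q : ℝ≥0∞ := 1 - (n:ℝ≥0∞)⁻¹ with hq
    set W : Ω → ℝ × ℝ := fun ω =>
      (τs k ω, Set.indicator (Gset σs n (k+1)) (fun _ => (1:ℝ)) ω) with hW
    have hGmeas : MeasurableSet (Gset σs n (k+1)) := meas_Gset M (k+1)
    have hWmeas : Measurable W :=
      (M.meas_τ k).prodMk (measurable_const.indicator hGmeas)
    have hind : ∀ ω, (Set.indicator (Gset σs n (k+1)) (fun _ => (1:ℝ)) ω = 1)
        ↔ ω ∈ Gset σs n (k+1) := by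
      intro ω
      by_cases h : ω ∈ Gset σs n (k+1)
      · simp [indicator_of_mem h, h]
      · simp [indicator_of_notMem h, h]
    -- independence of W from the (k+1)-st pair
    have hdisj : Disjoint (Finset.range (k+1)) ({k+1} : Finset ℕ) := by
      simp only [Finset.disjoint_left, Finset.mem_range, Finset.mem_singleton]
      intro a ha
      omega
    have hbase := M.indep.indepFun_finset (Finset.range (k+1)) {k+1} hdisj (meas_pair M)
    set Φ : ((Finset.range (k+1) : Finset ℕ) → ℝ × ℝ) → ℝ × ℝ := fun v =>
      (∑ i, (v i).1, Set.indicator {v | ∀ i, (v i).2 ≠ nr} (fun _ => (1:ℝ)) v) with hΦ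
    have hsetΦ : MeasurableSet {v : (Finset.range (k+1) : Finset ℕ) → ℝ × ℝ | ∀ i, (v i).2 ≠ nr} := by
      have : {v : (Finset.range (k+1) : Finset ℕ) → ℝ × ℝ | ∀ i, (v i).2 ≠ nr}
          = ⋂ i, (fun v : (Finset.range (k+1) : Finset ℕ) → ℝ × ℝ => (v i).2) ⁻¹' ({nr}ᶜ) := by
        ext v; simp
      rw [this]
      exact MeasurableSet.iInter fun i =>
        ((measurable_pi_apply i).snd) (measurableSet_singleton nr).compl
    have hΦmeas : Measurable Φ := by
      refine Measurable.prodMk ?_ (measurable_const.indicator hsetΦ)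
      exact Finset.measurable_sum Finset.univ (fun i _ => (measurable_pi_apply i).fst)
    set Ψ : (({k+1} : Finset ℕ) → ℝ × ℝ) → ℝ × ℝ := fun v => v ⟨k+1, by simp⟩ with hΨ
    have hΨmeas : Measurable Ψ := measurable_pi_apply _
    have hWeq : W = Φ ∘ (fun ω (i : (Finset.range (k+1) : Finset ℕ)) =>
        (interArrival τs (i : ℕ) ω, σs (i : ℕ) ω)) := by
      funext ω
      have h1 : (∑ i : (Finset.range (k+1) : Finset ℕ), interArrival τs (i : ℕ) ω) = τs k ω := by
        rw [Finset.sum_coe_sort (Finset.range (k+1)) (fun i => interArrival τs i ω)]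
        exact (τ_eq_sum M k ω).symm
      have h2 : ((fun (i : (Finset.range (k+1) : Finset ℕ)) =>
          (interArrival τs (i : ℕ) ω, σs (i : ℕ) ω)) ∈ {v : (Finset.range (k+1) : Finset ℕ) → ℝ × ℝ | ∀ i, (v i).2 ≠ nr})
          ↔ ω ∈ Gset σs n (k+1) := by
        simp only [mem_setOf_eq, Subtype.forall, Finset.mem_range, Gset, hnr]
      simp only [hW, hΦ, Function.comp_apply]
      refine Prod.ext ?_ ?_
      · exact h1.symm
      · by_cases h : ω ∈ Gset σs n (k+1)
        · rw [indicator_of_mem h, indicator_of_mem (h2.mpr h)]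
        · rw [indicator_of_notMem h, indicator_of_notMem (fun hc => h (h2.mp hc))]
    have hpm := meas_pair M (k+1)
    have hindep : IndepFun W (fun ω => (interArrival τs (k+1) ω, σs (k+1) ω)) P := by
      have hcomp := hbase.comp hΦmeas hΨmeas
      rw [hWeq]
      exact hcomp
    have hmap : P.map (fun ω => (W ω, (interArrival τs (k+1) ω, σs (k+1) ω)))
        = (P.map W).prod ((expMeasure 1).prod (segSeedMeasure n)) := by
      rw [← M.dist (k+1)]
      exact (indepFun_iff_map_prod_eq_prod_map_map hWmeas.aemeasurable hpm.aemeasurable).mp hindep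
    set F : Set ((ℝ × ℝ) × (ℝ × ℝ)) := {z | z.1.2 = 1 ∧ (z.2.2 ∈ C ∧ z.1.1 + z.2.1 ∈ B)} with hF
    have hFmeas : MeasurableSet F := by
      have : F = (fun z : (ℝ × ℝ) × (ℝ × ℝ) => z.1.2) ⁻¹' {1}
          ∩ ((fun z : (ℝ × ℝ) × (ℝ × ℝ) => z.2.2) ⁻¹' C
            ∩ (fun z : (ℝ × ℝ) × (ℝ × ℝ) => z.1.1 + z.2.1) ⁻¹' B) := rfl
      rw [this]
      exact ((measurable_fst.snd) (measurableSet_singleton 1)).inter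
        (((measurable_snd.snd) hC).inter ((measurable_fst.fst.add measurable_snd.fst) hB))
    have hτsucc : ∀ ω, τs k ω + interArrival τs (k+1) ω = τs (k+1) ω := fun ω => by
      show τs k ω + (τs (k+1) ω - τs k ω) = τs (k+1) ω; ring
    have hEF : Gset σs n (k+1) ∩ σs (k+1) ⁻¹' C ∩ τs (k+1) ⁻¹' B
        = (fun ω => (W ω, (interArrival τs (k+1) ω, σs (k+1) ω))) ⁻¹' F := by
      ext ω
      simp only [hF, mem_inter_iff, mem_preimage, mem_setOf_eq, hW, hτsucc ω, hind ω]
      tauto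
    have hA1 : MeasurableSet {w : ℝ × ℝ | w.2 = 1} :=
      measurable_snd (measurableSet_singleton (1:ℝ))
    have hBset : MeasurableSet {p : ℝ × ℝ | p.1 + p.2 ∈ B} :=
      (measurable_fst.add measurable_snd) hB
    have hEB : Measurable fun t : ℝ => expMeasure 1 {x | t + x ∈ B} := by
      have h := measurable_measure_prodMk_left (ν := expMeasure 1) hBset
      convert h using 2 with t
      rfl
    calc P (Gset σs n (k+1) ∩ σs (k+1) ⁻¹' C ∩ τs (k+1) ⁻¹' B)
        = ((P.map W).prod ((expMeasure 1).prod (segSeedMeasure n))) F := by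
          rw [hEF, ← Measure.map_apply (hWmeas.prodMk hpm) hFmeas, hmap]
      _ = ∫⁻ w, ((expMeasure 1).prod (segSeedMeasure n)) (Prod.mk w ⁻¹' F) ∂(P.map W) :=
          Measure.prod_apply hFmeas
      _ = ∫⁻ w, {w : ℝ × ℝ | w.2 = 1}.indicator
            (fun w => expMeasure 1 {x | w.1 + x ∈ B} * segSeedMeasure n C) w ∂(P.map W) := by
          refine lintegral_congr fun w => ?_
          by_cases hw : w.2 = 1
          · rw [Set.indicator_of_mem (show w ∈ {w : ℝ × ℝ | w.2 = 1} from hw)]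
            have hps : Prod.mk w ⁻¹' F = {x | w.1 + x ∈ B} ×ˢ C := by
              ext z
              simp only [hF, mem_preimage, mem_setOf_eq, mem_prod, hw]
              tauto
            rw [hps, Measure.prod_prod]
          · rw [Set.indicator_of_notMem (show w ∉ {w : ℝ × ℝ | w.2 = 1} from hw)]
            have hps : Prod.mk w ⁻¹' F = ∅ := by
              ext z; simp [hF, hw]
            rw [hps, measure_empty]
      _ = ∫⁻ w in {w : ℝ × ℝ | w.2 = 1},
            expMeasure 1 {x | w.1 + x ∈ B} * segSeedMeasure n C ∂(P.map W) :=
          lintegral_indicator hA1 _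
      _ = segSeedMeasure n C * ∫⁻ w in {w : ℝ × ℝ | w.2 = 1},
            expMeasure 1 {x | w.1 + x ∈ B} ∂(P.map W) := by
          rw [← lintegral_const_mul' _ _ (measure_ne_top _ _)]
          exact lintegral_congr fun w => mul_comm _ _
      _ = segSeedMeasure n C * ∫⁻ ω in W ⁻¹' {w : ℝ × ℝ | w.2 = 1},
            expMeasure 1 {x | τs k ω + x ∈ B} ∂P := by
          have hEBw : Measurable fun w : ℝ × ℝ => expMeasure 1 {x | w.1 + x ∈ B} :=
            hEB.comp measurable_fst
          rw [setLIntegral_map hA1 hEBw hWmeas]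
      _ = segSeedMeasure n C * ∫⁻ ω in Gset σs n (k+1),
            expMeasure 1 {x | τs k ω + x ∈ B} ∂P := by
          congr 1
          have hpre : W ⁻¹' {w : ℝ × ℝ | w.2 = 1} = Gset σs n (k+1) := by
            ext ω
            simp only [mem_preimage, mem_setOf_eq, hW]
            exact hind ω
          rw [hpre]
      _ = segSeedMeasure n C * ∫⁻ t, expMeasure 1 {x | t + x ∈ B}
            ∂((P.restrict (Gset σs n (k+1))).map (τs k)) := by
          rw [lintegral_map hEB (M.meas_τ k)]
      _ = segSeedMeasure n C * ∫⁻ t, expMeasure 1 {x | t + x ∈ B} ∂((q^(k+1)) • rho k) := by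
          congr 2
          refine Measure.ext fun D hD => ?_
          rw [Measure.map_apply (M.meas_τ k) hD, Measure.restrict_apply (M.meas_τ k hD)]
          have hset : τs k ⁻¹' D ∩ Gset σs n (k+1)
              = Gset σs n k ∩ σs k ⁻¹' ({nr}ᶜ) ∩ τs k ⁻¹' D := by
            ext ω
            simp only [mem_inter_iff, mem_preimage, Gset, mem_setOf_eq, mem_compl_iff,
              mem_singleton_iff, Nat.lt_succ_iff_lt_or_eq]
            constructor
            · rintro ⟨hτ, hall⟩
              exact ⟨⟨fun i hi => hall i (Or.inl hi), hall k (Or.inr rfl)⟩, hτ⟩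
            · rintro ⟨⟨hall, hk⟩, hτ⟩
              refine ⟨hτ, fun i hi => ?_⟩
              rcases hi with hi | hi
              · exact hall i hi
              · rw [hi]; exact hk
          rw [hset, ih (measurableSet_singleton nr).compl hD, segSeed_compl_n hn]
          rw [Measure.smul_apply, smul_eq_mul, ← hq, pow_succ]
      _ = segSeedMeasure n C * (q^(k+1) * ∫⁻ t, expMeasure 1 {x | t + x ∈ B} ∂(rho k)) := by
          rw [lintegral_smul_measure, smul_eq_mul]
      _ = segSeedMeasure n C * (q^(k+1) * rho (k+1) B) := by
          congr 2
          have h1 : ∫⁻ t, expMeasure 1 {x | t + x ∈ B} ∂(rho k)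
              = ((rho k).prod (expMeasure 1)) {p : ℝ × ℝ | p.1 + p.2 ∈ B} := by
            rw [Measure.prod_apply hBset]
            rfl
          have h2 : ((rho k).prod (expMeasure 1)) {p : ℝ × ℝ | p.1 + p.2 ∈ B}
              = ((expMeasure 1).prod (rho k)) {p : ℝ × ℝ | p.1 + p.2 ∈ B} := by
            rw [← Measure.prod_swap, Measure.map_apply measurable_swap hBset]
            congr 1
            ext p
            simp only [mem_preimage, Prod.fst_swap, Prod.snd_swap, mem_setOf_eq]
            rw [add_comm]
          rw [h1, h2, show rho (k+1)
            = ((expMeasure 1).prod (rho k)).map (fun p : ℝ × ℝ => p.1 + p.2) from rfl,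
            Measure.map_apply (by fun_prop) hB]
          rfl
      _ = q^(k+1) * segSeedMeasure n C * rho (k+1) B := by ring

lemma natInf_eq_iff {S : Set ℕ} {k : ℕ} :
    sInf S = k ↔ (k ∈ S ∧ ∀ m < k, m ∉ S) ∨ (S = ∅ ∧ k = 0) := by
  by_cases hS : S.Nonempty
  · constructor
    · intro h
      exact Or.inl ⟨h ▸ Nat.sInf_mem hS, fun m hm => Nat.notMem_of_lt_sInf (h ▸ hm)⟩
    · rintro (⟨hk, hmin⟩ | ⟨hS0, _⟩)
      · refine le_antisymm (Nat.sInf_le hk) ?_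
        by_contra h
        push_neg at h
        exact hmin _ h (Nat.sInf_mem hS)
      · obtain ⟨x, hx⟩ := hS
        rw [hS0] at hx
        exact absurd hx (notMem_empty x)
  · rw [not_nonempty_iff_eq_empty] at hS
    subst hS
    simp only [Nat.sInf_empty, notMem_empty, false_and, false_or, eq_self_iff_true, true_and]
    exact eq_comm

/-- Index of the first seed at position `c`. -/
def firstHit (σs : ℕ → Ω → ℝ) (c : ℝ) (ω : Ω) : ℕ := sInf {i | σs i ω = c}

/-- Arrival time of the first seed at position `c`. -/
def hitTime (τs σs : ℕ → Ω → ℝ) (c : ℝ) (ω : Ω) : ℝ := τs (firstHit σs c ω) ω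

lemma meas_firstHit (hσ : ∀ i, Measurable (σs i)) (c : ℝ) : Measurable (firstHit σs c) := by
  apply measurable_to_countable'
  intro k
  have hset : firstHit σs c ⁻¹' {k} = ({ω | σs k ω = c} ∩ ⋂ m, ⋂ _ : m < k, {ω | σs m ω ≠ c})
      ∪ ((⋂ i, {ω | σs i ω ≠ c}) ∩ (if k = 0 then univ else (∅ : Set Ω))) := by
    ext ω
    simp only [mem_preimage, mem_singleton_iff, firstHit, natInf_eq_iff, mem_union, mem_inter_iff,
      mem_setOf_eq, mem_iInter]
    constructor
    · rintro (⟨h1, h2⟩ | ⟨h1, h2⟩)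
      · exact Or.inl ⟨h1, fun m hm => h2 m hm⟩
      · refine Or.inr ⟨fun i hi => ?_, by simp [h2]⟩
        have : i ∈ {i | σs i ω = c} := hi
        rw [h1] at this
        exact absurd this (notMem_empty i)
    · rintro (⟨h1, h2⟩ | ⟨h1, h2⟩)
      · exact Or.inl ⟨h1, h2⟩
      · refine Or.inr ⟨?_, ?_⟩
        · ext i
          simp only [mem_setOf_eq, notMem_empty, iff_false]
          exact h1 i
        · by_cases h : k = 0
          · exact h
          · simp only [h, if_false] at h2
            exact absurd h2 (notMem_empty ω)
  rw [hset]
  refine MeasurableSet.union (MeasurableSet.inter ?_ ?_) (MeasurableSet.inter ?_ ?_)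
  · exact hσ k (measurableSet_singleton c)
  · exact MeasurableSet.iInter fun m =>
      MeasurableSet.iInter fun _ => (hσ m (measurableSet_singleton c)).compl
  · exact MeasurableSet.iInter fun i => (hσ i (measurableSet_singleton c)).compl
  · split_ifs
    · exact MeasurableSet.univ
    · exact MeasurableSet.empty

lemma meas_hitTime (hτ : ∀ i, Measurable (τs i)) (hσ : ∀ i, Measurable (σs i)) (c : ℝ) :
    Measurable (hitTime τs σs c) := by
  have h : Measurable fun p : Ω × ℕ => τs p.2 p.1 :=
    measurable_from_prod_countable_left (fun i => hτ i)
  exact h.comp (measurable_id.prodMk (meas_firstHit hσ c))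

include M in
lemma P_all_ne_le (hn : 1 ≤ n) (c : ℝ) (k : ℕ) :
    P {ω | ∀ i, σs i ω ≠ c} ≤ (segSeedMeasure n ({c}ᶜ))^k := by
  have hsub : {ω | ∀ i, σs i ω ≠ c} ⊆ ⋂ i ∈ Finset.range k, σs i ⁻¹' ({c}ᶜ) := by
    intro ω hω
    simp only [mem_iInter, mem_preimage, mem_compl_iff, mem_singleton_iff]
    exact fun i _ => hω i
  refine (measure_mono hsub).trans ?_
  rw [(σ_indep M).measure_inter_preimage_eq_mul (Finset.range k)
    (fun i _ => (measurableSet_singleton c).compl)]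
  rw [Finset.prod_congr rfl
    (fun i _ => P_σ_preimage M hn i (measurableSet_singleton c).compl)]
  simp

include M in
lemma P_all_ne_zero (hn : 1 ≤ n) {c : ℝ} (hc : segSeedMeasure n ({c}ᶜ) < 1) :
    P {ω | ∀ i, σs i ω ≠ c} = 0 := by
  have htend := ENNReal.tendsto_pow_atTop_nhds_zero_of_lt_one hc
  have hle : P {ω | ∀ i, σs i ω ≠ c} ≤ 0 :=
    ge_of_tendsto' htend (fun k => P_all_ne_le M hn c k)
  exact le_antisymm hle zero_le

lemma segSeed_compl_n_lt_one (hn : 1 ≤ n) : segSeedMeasure n ({(n:ℝ)}ᶜ) < 1 := by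
  rw [segSeed_compl_n hn]
  refine ENNReal.sub_lt_self ENNReal.one_ne_top one_ne_zero ?_
  simp only [ne_eq, ENNReal.inv_eq_zero]
  exact ENNReal.natCast_ne_top n

lemma segSeed_compl_zero_lt_one (hn : 2 ≤ n) : segSeedMeasure n ({(0:ℝ)}ᶜ) < 1 := by
  rw [segSeed_compl_zero (le_trans one_le_two hn)]
  rw [ENNReal.inv_lt_one]
  exact_mod_cast lt_of_lt_of_le one_lt_two (by exact_mod_cast hn)

include M in
lemma P_TN_gt (hn : 1 ≤ n) {s : ℝ} :
    P {ω | s < hitTime τs σs (n:ℝ) ω}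
      = ∑' k, (1 - (n:ℝ≥0∞)⁻¹)^k * (n:ℝ≥0∞)⁻¹ * rho k (Ioi s) := by
  set nr : ℝ := (n:ℝ) with hnr
  set A : ℕ → Set Ω := fun k => Gset σs n k ∩ σs k ⁻¹' {nr} ∩ τs k ⁻¹' (Ioi s) with hA
  have hAmeas : ∀ k, MeasurableSet (A k) := fun k =>
    ((meas_Gset M k).inter (M.meas_σ k (measurableSet_singleton _))).inter
      (M.meas_τ k measurableSet_Ioi)
  have key : ∀ k l, k < l → Disjoint (A k) (A l) := by
    intro k l hkl
    rw [Set.disjoint_left]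
    rintro ω ⟨⟨-, hσk⟩, -⟩ ⟨⟨hGl, -⟩, -⟩
    exact hGl k hkl hσk
  have hdisj : Pairwise (Function.onFun Disjoint A) := fun k l hkl =>
    hkl.lt_or_gt.elim (key k l) (fun h => (key l k h).symm)
  have hunion : {ω | s < hitTime τs σs nr ω} \ {ω | ∀ i, σs i ω ≠ nr} = ⋃ k, A k := by
    ext ω
    simp only [mem_diff, mem_setOf_eq, not_forall, not_not, mem_iUnion]
    constructor
    · rintro ⟨hgt, i, hi⟩
      have hne' : {i | σs i ω = nr}.Nonempty := ⟨i, hi⟩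
      refine ⟨firstHit σs nr ω, ⟨⟨fun m hm => ?_, ?_⟩, ?_⟩⟩
      · exact Nat.notMem_of_lt_sInf hm
      · exact Nat.sInf_mem hne'
      · exact hgt
    · rintro ⟨k, ⟨⟨hG, hσk⟩, hτk⟩⟩
      have hfh : firstHit σs nr ω = k :=
        natInf_eq_iff.mpr (Or.inl ⟨hσk, fun m hm => hG m hm⟩)
      refine ⟨?_, ⟨k, hσk⟩⟩
      show s < τs (firstHit σs nr ω) ω
      rw [hfh]
      exact hτk
  have hZ : P {ω | ∀ i, σs i ω ≠ nr} = 0 :=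
    P_all_ne_zero M hn (segSeed_compl_n_lt_one hn)
  calc P {ω | s < hitTime τs σs nr ω}
      = P ({ω | s < hitTime τs σs nr ω} \ {ω | ∀ i, σs i ω ≠ nr}) :=
        (measure_diff_null hZ).symm
    _ = P (⋃ k, A k) := by rw [hunion]
    _ = ∑' k, P (A k) := measure_iUnion hdisj hAmeas
    _ = _ := by
        refine tsum_congr fun k => ?_
        rw [hA]
        rw [claim M hn k (measurableSet_singleton nr) measurableSet_Ioi,
          segSeed_singleton_n hn]

lemma tsum_geom_gam {qr : ℝ} (hq0 : 0 ≤ qr) (hq1 : qr < 1) {s : ℝ} (hs : 0 ≤ s) :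
    ∑' k, qr^k * ((1 - qr) * gam k s) = Real.exp (-((1-qr) * s)) := by
  have hgam : ∀ k, gam k s
      = Real.exp (-s) * ∑ j ∈ Finset.range (k+1), s^j / (Nat.factorial j) := fun k => by
    rw [gam, if_pos hs]
  have hf : Summable fun m : ℕ => ‖qr^m‖ := by
    simpa [Real.norm_eq_abs, abs_of_nonneg hq0] using summable_geometric_of_lt_one hq0 hq1
  have hg : Summable fun j : ℕ => ‖(qr*s)^j / (Nat.factorial j)‖ :=
    (Real.summable_pow_div_factorial (qr*s)).abs
  have hmul := tsum_mul_tsum_eq_tsum_sum_range_of_summable_norm hf hg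
  have hterm : ∀ n : ℕ, ∑ k ∈ Finset.range (n+1), qr^k * ((qr*s)^(n-k) / (Nat.factorial (n-k)))
      = qr^n * ∑ j ∈ Finset.range (n+1), s^j / (Nat.factorial j) := by
    intro n
    rw [Finset.mul_sum, ← Finset.sum_range_reflect
      (fun j => qr^n * (s^j / (Nat.factorial j))) (n+1)]
    refine Finset.sum_congr rfl fun k hk => ?_
    rw [Finset.mem_range] at hk
    have hkn : k ≤ n := Nat.lt_succ_iff.mp hk
    have h1 : n + 1 - 1 - k = n - k := by omega
    have hqr : qr^k * qr^(n-k) = qr^n := by rw [← pow_add]; congr 1; omega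
    rw [h1, ← hqr, mul_pow]
    ring
  have hsum1 : ∑' (m : ℕ), qr^m = (1 - qr)⁻¹ := tsum_geometric_of_lt_one hq0 hq1
  have hsum2 : ∑' (j : ℕ), (qr*s)^j / (Nat.factorial j : ℝ) = Real.exp (qr*s) := by
    rw [Real.exp_eq_exp_ℝ, NormedSpace.exp_eq_tsum_div]
  have hmain : ∑' n : ℕ, qr^n * ∑ j ∈ Finset.range (n+1), s^j / (Nat.factorial j)
      = (1 - qr)⁻¹ * Real.exp (qr*s) := by
    rw [← hsum1, ← hsum2, hmul]
    exact tsum_congr fun n => (hterm n).symm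
  calc ∑' k, qr^k * ((1 - qr) * gam k s)
      = ∑' k, ((1-qr) * Real.exp (-s))
          * (qr^k * ∑ j ∈ Finset.range (k+1), s^j / (Nat.factorial j)) := by
        refine tsum_congr fun k => ?_
        rw [hgam k]
        ring
    _ = ((1-qr) * Real.exp (-s)) * ∑' k, qr^k * ∑ j ∈ Finset.range (k+1), s^j / (Nat.factorial j) :=
        tsum_mul_left
    _ = Real.exp (-((1-qr) * s)) := by
        rw [hmain]
        have hne : (1:ℝ) - qr ≠ 0 := by linarith
        rw [← mul_assoc, mul_comm ((1-qr) * Real.exp (-s)) (1-qr)⁻¹, ← mul_assoc,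
          inv_mul_cancel₀ hne, one_mul, ← Real.exp_add]
        congr 1
        ring

include M in
lemma P_TN_gt_eval (hn : 2 ≤ n) {s : ℝ} (hs : 0 ≤ s) :
    P {ω | s < hitTime τs σs (n:ℝ) ω} = ENNReal.ofReal (Real.exp (-((n:ℝ)⁻¹ * s))) := by
  have hn1 : 1 ≤ n := le_trans one_le_two hn
  have hnpos : (0:ℝ) < n := by
    have : (1:ℝ) ≤ n := by exact_mod_cast hn1
    linarith
  set pr : ℝ := (n:ℝ)⁻¹ with hprdef
  have hpr0 : 0 < pr := inv_pos.mpr hnpos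
  have hpr1 : pr ≤ 1 := by
    rw [hprdef, inv_le_one_iff₀]
    right
    have : (1:ℝ) ≤ n := by exact_mod_cast hn1
    linarith
  have hqr0 : 0 ≤ 1 - pr := by linarith
  have hqr1 : 1 - pr < 1 := by linarith
  have hp : (n:ℝ≥0∞)⁻¹ = ENNReal.ofReal pr := by
    rw [hprdef, ENNReal.ofReal_inv_of_pos hnpos, ENNReal.ofReal_natCast]
  have hq : 1 - (n:ℝ≥0∞)⁻¹ = ENNReal.ofReal (1 - pr) := by
    rw [ENNReal.ofReal_sub _ (le_of_lt hpr0), ENNReal.ofReal_one, hp]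
  have hnonneg : ∀ k : ℕ, 0 ≤ (1-pr)^k * (pr * gam k s) := fun k =>
    mul_nonneg (pow_nonneg hqr0 k) (mul_nonneg (le_of_lt hpr0) (gam_nonneg k s))
  have hsumm : Summable fun k : ℕ => (1-pr)^k * (pr * gam k s) := by
    refine Summable.of_nonneg_of_le hnonneg (fun k => ?_)
      (((summable_geometric_of_lt_one hqr0 hqr1).mul_right pr))
    calc (1-pr)^k * (pr * gam k s) ≤ (1-pr)^k * (pr * 1) := by
          refine mul_le_mul_of_nonneg_left ?_ (pow_nonneg hqr0 k)
          exact mul_le_mul_of_nonneg_left (gam_le_one k s) (le_of_lt hpr0)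
      _ = (1-pr)^k * pr := by ring
  rw [P_TN_gt M hn1]
  have hterm : ∀ k : ℕ, (1 - (n:ℝ≥0∞)⁻¹)^k * (n:ℝ≥0∞)⁻¹ * rho k (Ioi s)
      = ENNReal.ofReal ((1-pr)^k * (pr * gam k s)) := by
    intro k
    rw [rho_Ioi, hq, hp, ← ENNReal.ofReal_pow hqr0,
      ← ENNReal.ofReal_mul (pow_nonneg hqr0 k),
      ← ENNReal.ofReal_mul (mul_nonneg (pow_nonneg hqr0 k) (le_of_lt hpr0)),
      mul_assoc]
  rw [tsum_congr hterm, ← ENNReal.ofReal_tsum_of_nonneg hnonneg hsumm]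
  congr 1
  have := tsum_geom_gam hqr0 hqr1 hs
  have hsimp : (1:ℝ) - (1 - pr) = pr := by ring
  rw [hsimp] at this
  rw [this]

include M in
lemma law_TN (hn : 2 ≤ n) :
    P.map (fun ω => hitTime τs σs (n:ℝ) ω / n) = expMeasure 1 := by
  have hn1 : 1 ≤ n := le_trans one_le_two hn
  have hnpos : (0:ℝ) < n := by
    have : (1:ℝ) ≤ n := by exact_mod_cast hn1
    linarith
  haveI : IsProbabilityMeasure (expMeasure 1) := isProbabilityMeasure_expMeasure one_pos
  have hmeas : Measurable fun ω => hitTime τs σs (n:ℝ) ω / n :=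
    (meas_hitTime M.meas_τ M.meas_σ _).div_const _
  haveI : IsProbabilityMeasure (P.map (fun ω => hitTime τs σs (n:ℝ) ω / n)) :=
    Measure.isProbabilityMeasure_map hmeas.aemeasurable
  have hIoi : ∀ t : ℝ, (P.map (fun ω => hitTime τs σs (n:ℝ) ω / n)) (Ioi t)
      = expMeasure 1 (Ioi t) := by
    intro t
    rw [Measure.map_apply hmeas measurableSet_Ioi]
    rcases le_or_gt 0 t with ht | ht
    · have hset : (fun ω => hitTime τs σs (n:ℝ) ω / n) ⁻¹' (Ioi t)
          = {ω | (n:ℝ) * t < hitTime τs σs (n:ℝ) ω} := by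
        ext ω
        simp only [mem_preimage, mem_Ioi, mem_setOf_eq, lt_div_iff₀ hnpos]
        rw [mul_comm]
      rw [hset, P_TN_gt_eval M hn (by positivity), expMeasure_Ioi_of_nonneg one_pos ht]
      congr 2
      field_simp
    · have hset : (fun ω => hitTime τs σs (n:ℝ) ω / n) ⁻¹' (Ioi t) = univ := by
        ext ω
        simp only [mem_preimage, mem_Ioi, mem_univ, iff_true]
        have := τ_pos M (firstHit σs (n:ℝ) ω) ω
        have : 0 < hitTime τs σs (n:ℝ) ω / n := by
          apply div_pos this hnpos
        linarith
      rw [hset, expMeasure_apply_Ioi one_pos, if_neg (not_le.mpr ht), measure_univ]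
  refine Measure.ext_of_Iic _ _ (fun t => ?_)
  have h1 : ∀ (μ : Measure ℝ) [IsProbabilityMeasure μ], μ (Iic t) = 1 - μ (Ioi t) := by
    intro μ _
    rw [show Iic t = (Ioi t)ᶜ by simp, measure_compl measurableSet_Ioi (measure_ne_top _ _),
      measure_univ]
  rw [h1, h1, hIoi t]

include M in
lemma P_T0_bad (hn : 2 ≤ n) {u : ℝ} (hu : 0 ≤ u) :
    P ({ω | ∀ i, σs i ω = 0 ∨ σs i ω = (n:ℝ)} ∩ {ω | u < hitTime τs σs 0 ω})
      ≤ (n:ℝ≥0∞)⁻¹ * (n:ℝ≥0∞)⁻¹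
        + (ENNReal.ofReal (Real.exp (-(u/2))) + ENNReal.ofReal (Real.exp (-(u/2)))) := by
  have hn1 : 1 ≤ n := le_trans one_le_two hn
  set nr : ℝ := (n:ℝ) with hnr
  have hsub : {ω | ∀ i, σs i ω = 0 ∨ σs i ω = nr} ∩ {ω | u < hitTime τs σs 0 ω}
      ⊆ (σs 0 ⁻¹' {nr} ∩ σs 1 ⁻¹' {nr})
        ∪ ({ω | u/2 < interArrival τs 0 ω} ∪ {ω | u/2 < interArrival τs 1 ω}) := by
    rintro ω ⟨hall, hgt⟩
    simp only [mem_setOf_eq] at hall hgt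
    by_cases hσ : σs 0 ω = nr ∧ σs 1 ω = nr
    · exact Or.inl ⟨hσ.1, hσ.2⟩
    · have hj : σs 0 ω = 0 ∨ σs 1 ω = 0 := by
        rcases hall 0 with h0 | h0
        · exact Or.inl h0
        · rcases hall 1 with h1 | h1
          · exact Or.inr h1
          · exact absurd ⟨h0, h1⟩ hσ
      have hfh : firstHit σs 0 ω ≤ 1 := by
        rcases hj with h | h
        · exact le_trans (Nat.sInf_le h) (Nat.zero_le 1)
        · exact Nat.sInf_le h
      have hT0le : hitTime τs σs 0 ω ≤ τs 1 ω := (M.mono ω).monotone hfh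
      have hτ1 : τs 1 ω = interArrival τs 0 ω + interArrival τs 1 ω := by
        rw [τ_eq_sum M 1 ω]
        simp [Finset.sum_range_succ]
      have hlt : u < interArrival τs 0 ω + interArrival τs 1 ω := by
        rw [← hτ1]; linarith
      right
      by_contra hc
      simp only [mem_union, mem_setOf_eq, not_or, not_lt] at hc
      obtain ⟨h1, h2⟩ := hc
      linarith
  refine (measure_mono hsub).trans ?_
  refine (measure_union_le _ _).trans ?_
  refine add_le_add ?_ ((measure_union_le _ _).trans (add_le_add ?_ ?_))
  · have hprod := (σ_indep M).measure_inter_preimage_eq_mul (S := ({0, 1} : Finset ℕ))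
      (sets := fun _ => ({nr} : Set ℝ)) (fun i _ => measurableSet_singleton nr)
    have hseteq : (⋂ i ∈ ({0,1} : Finset ℕ), σs i ⁻¹' ({nr} : Set ℝ))
        = σs 0 ⁻¹' {nr} ∩ σs 1 ⁻¹' {nr} := by
      ext ω
      simp [Finset.mem_insert]
    rw [hseteq] at hprod
    rw [hprod, Finset.prod_pair (by norm_num : (0:ℕ) ≠ 1),
      P_σ_preimage M hn1 0 (measurableSet_singleton nr),
      P_σ_preimage M hn1 1 (measurableSet_singleton nr), segSeed_singleton_n hn1]
  · rw [P_X_gt M hn1 0 (by linarith)]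
  · rw [P_X_gt M hn1 1 (by linarith)]

include M in
lemma coverTime_eq {ω : Ω} (hω1 : ∀ i, σs i ω = 0 ∨ σs i ω = (n:ℝ))
    (hω2 : ∃ i, σs i ω = 0) (hω3 : ∃ i, σs i ω = (n:ℝ)) :
    segmentCoverTime n τs σs ω
      = min (hitTime τs σs 0 ω + (n:ℝ))
          (min (hitTime τs σs (n:ℝ) ω + (n:ℝ))
            (max (hitTime τs σs 0 ω) (max (hitTime τs σs (n:ℝ) ω)
              ((hitTime τs σs 0 ω + hitTime τs σs (n:ℝ) ω + (n:ℝ)) / 2)))) := by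
  have hnr0 : (0:ℝ) ≤ (n:ℝ) := Nat.cast_nonneg n
  set nr : ℝ := (n:ℝ) with hnr
  set a : ℝ := hitTime τs σs 0 ω with ha
  set b : ℝ := hitTime τs σs nr ω with hb
  have haτ : τs (firstHit σs 0 ω) ω = a := rfl
  have hbτ : τs (firstHit σs nr ω) ω = b := rfl
  have hane : {i | σs i ω = 0}.Nonempty := hω2
  have hbne : {i | σs i ω = nr}.Nonempty := hω3
  have haσ : σs (firstHit σs 0 ω) ω = 0 := Nat.sInf_mem hane
  have hbσ : σs (firstHit σs nr ω) ω = nr := Nat.sInf_mem hbne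
  have hapos : 0 < a := τ_pos M _ ω
  have hbpos : 0 < b := τ_pos M _ ω
  have hamin : ∀ i, σs i ω = 0 → a ≤ τs i ω := fun i hi =>
    (M.mono ω).monotone (Nat.sInf_le hi)
  have hbmin : ∀ i, σs i ω = nr → b ≤ τs i ω := fun i hi =>
    (M.mono ω).monotone (Nat.sInf_le hi)
  set Cstar : ℝ := min (a + nr) (min (b + nr) (max a (max b ((a + b + nr) / 2)))) with hC
  have hkey : ∀ t, ∀ x ∈ Icc (0:ℝ) nr, x ∈ coveredSet τs σs ω t →
      (a ≤ t ∧ x ≤ t - a) ∨ (b ≤ t ∧ nr - (t - b) ≤ x) := by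
    intro t x hx hmem
    obtain ⟨i, hi, hxi⟩ := mem_iUnion₂.mp hmem
    simp only [mem_setOf_eq] at hi
    rw [mem_closedBall, Real.dist_eq] at hxi
    have habs := abs_le.mp hxi
    rcases hω1 i with h0 | h0
    · rw [h0] at habs
      have hτ := hamin i h0
      exact Or.inl ⟨by linarith, by linarith [habs.2, hx.1]⟩
    · rw [h0] at habs
      have hτ := hbmin i h0
      exact Or.inr ⟨by linarith, by linarith [habs.1]⟩
  have hmem0 : ∀ t x, a ≤ t → 0 ≤ x → x ≤ t - a → x ∈ coveredSet τs σs ω t := by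
    intro t x hat hx0 hxa
    refine mem_iUnion₂.mpr ⟨firstHit σs 0 ω, ?_, ?_⟩
    · show τs (firstHit σs 0 ω) ω ≤ t
      rw [haτ]; exact hat
    · rw [mem_closedBall, Real.dist_eq, haσ, sub_zero, abs_of_nonneg hx0, haτ]
      exact hxa
  have hmemn : ∀ t x, b ≤ t → x ≤ nr → nr - (t - b) ≤ x → x ∈ coveredSet τs σs ω t := by
    intro t x hbt hxn hxb
    refine mem_iUnion₂.mpr ⟨firstHit σs nr ω, ?_, ?_⟩
    · show τs (firstHit σs nr ω) ω ≤ t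
      rw [hbτ]; exact hbt
    · rw [mem_closedBall, Real.dist_eq, hbσ, hbτ, abs_le]
      exact ⟨by linarith, by linarith⟩
  have hCpos : 0 < Cstar := by
    rw [hC]
    refine lt_min (by linarith) (lt_min (by linarith) ?_)
    exact lt_max_of_lt_left hapos
  have hiff : ∀ t, (0 ≤ t ∧ Icc (0:ℝ) nr ⊆ coveredSet τs σs ω t) ↔ Cstar ≤ t := by
    intro t
    constructor
    · rintro ⟨ht0, hcov⟩
      by_contra hlt
      push_neg at hlt
      have h1 : t < a + nr := lt_of_lt_of_le hlt (min_le_left _ _)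
      have h2 : t < b + nr :=
        lt_of_lt_of_le hlt ((min_le_right _ _).trans (min_le_left _ _))
      have h3 : t < max a (max b ((a + b + nr) / 2)) :=
        lt_of_lt_of_le hlt ((min_le_right _ _).trans (min_le_right _ _))
      by_cases hat : a ≤ t
      · by_cases hbt : b ≤ t
        · have h2t : t < (a + b + nr) / 2 := by
            rcases lt_max_iff.mp h3 with h | h
            · linarith
            · rcases lt_max_iff.mp h with h | h
              · linarith
              · exact h
          set x : ℝ := ((t - a) + (nr - (t - b))) / 2 with hx
          have hx1 : t - a < x := by rw [hx]; linarith
          have hx2 : x < nr - (t - b) := by rw [hx]; linarith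
          have hxmem : x ∈ Icc (0:ℝ) nr := ⟨by linarith, by linarith⟩
          rcases hkey t x hxmem (hcov hxmem) with ⟨-, h⟩ | ⟨-, h⟩
          · linarith
          · linarith
        · push_neg at hbt
          set x : ℝ := ((t - a) + nr) / 2 with hx
          have hx1 : t - a < x := by rw [hx]; linarith
          have hx2 : x < nr := by rw [hx]; linarith
          have hxmem : x ∈ Icc (0:ℝ) nr := ⟨by linarith, by linarith⟩
          rcases hkey t x hxmem (hcov hxmem) with ⟨-, h⟩ | ⟨hb', -⟩
          · linarith
          · linarith
      · push_neg at hat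
        by_cases hbt : b ≤ t
        · set x : ℝ := (nr - (t - b)) / 2 with hx
          have hpos' : 0 < nr - (t - b) := by linarith
          have hx2 : x < nr - (t - b) := by rw [hx]; linarith
          have hxmem : x ∈ Icc (0:ℝ) nr := ⟨by rw [hx]; linarith, by linarith⟩
          rcases hkey t x hxmem (hcov hxmem) with ⟨ha', -⟩ | ⟨-, h⟩
          · linarith
          · linarith
        · push_neg at hbt
          have h0mem : (0:ℝ) ∈ Icc (0:ℝ) nr := ⟨le_refl 0, hnr0⟩
          rcases hkey t 0 h0mem (hcov h0mem) with ⟨ha', -⟩ | ⟨hb', -⟩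
          · linarith
          · linarith
    · intro hCt
      have ht0 : 0 ≤ t := le_trans (le_of_lt hCpos) hCt
      refine ⟨ht0, fun x hx => ?_⟩
      obtain ⟨hx0, hxn⟩ := hx
      rw [hC] at hCt
      rcases min_le_iff.mp hCt with h | h
      · exact hmem0 t x (by linarith) hx0 (by linarith)
      rcases min_le_iff.mp h with h | h
      · exact hmemn t x (by linarith) hxn (by linarith)
      · obtain ⟨hat, h'⟩ := max_le_iff.mp h
        obtain ⟨hbt, hct⟩ := max_le_iff.mp h'
        by_cases hxa : x ≤ t - a
        · exact hmem0 t x hat hx0 hxa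
        · push_neg at hxa
          exact hmemn t x hbt hxn (by linarith)
  have hset : {t : ℝ | 0 ≤ t ∧ Icc (0:ℝ) nr ⊆ coveredSet τs σs ω t} = Ici Cstar := by
    ext t
    rw [mem_setOf_eq, mem_Ici]
    exact hiff t
  show sInf {t : ℝ | 0 ≤ t ∧ Icc (0:ℝ) nr ⊆ coveredSet τs σs ω t} = Cstar
  rw [hset, csInf_Ici]

lemma cstar_bounds {a b nr : ℝ} (ha : 0 < a) (hb : 0 < b) (hnr : 0 ≤ nr) :
    min nr ((nr + b)/2)
      ≤ min (a + nr) (min (b + nr) (max a (max b ((a + b + nr) / 2)))) ∧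
    min (a + nr) (min (b + nr) (max a (max b ((a + b + nr) / 2))))
      ≤ min nr ((nr + b)/2) + a := by
  constructor
  · refine le_min (le_trans (min_le_left _ _) (by linarith)) (le_min ?_ ?_)
    · exact le_trans (min_le_left _ _) (by linarith)
    · rcases le_total nr b with h | h
      · exact le_trans (min_le_left _ _)
          (le_trans h (le_max_of_le_right (le_max_left _ _)))
      · exact le_trans (min_le_right _ _)
          (le_max_of_le_right (le_max_of_le_right (by linarith)))
  · rcases le_total nr b with h | h
    · have hM : min nr ((nr + b)/2) = nr := min_eq_left (by linarith)
      rw [hM]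
      exact le_trans (min_le_left _ _) (by linarith)
    · have hM : min nr ((nr + b)/2) = (nr + b)/2 := min_eq_right (by linarith)
      rw [hM]
      refine le_trans ((min_le_right _ _).trans (min_le_right _ _)) ?_
      exact max_le (by linarith) (max_le (by linarith) (by linarith))

/-- The almost sure event on which the cover time formula holds. -/
def GoodSet (σs : ℕ → Ω → ℝ) (n : ℕ) : Set Ω :=
  {ω | (∀ i, σs i ω = 0 ∨ σs i ω = (n:ℝ)) ∧ (∃ i, σs i ω = 0) ∧ (∃ i, σs i ω = (n:ℝ))}

lemma meas_GoodSet (hσ : ∀ i, Measurable (σs i)) : MeasurableSet (GoodSet σs n) := by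
  have h1 : MeasurableSet {ω | ∀ i, σs i ω = 0 ∨ σs i ω = (n:ℝ)} := by
    have : {ω | ∀ i, σs i ω = 0 ∨ σs i ω = (n:ℝ)}
        = ⋂ i, (σs i ⁻¹' {0} ∪ σs i ⁻¹' {(n:ℝ)}) := by
      ext ω; simp [mem_iInter]
    rw [this]
    exact MeasurableSet.iInter fun i =>
      (hσ i (measurableSet_singleton 0)).union (hσ i (measurableSet_singleton _))
  have h2 : MeasurableSet {ω | ∃ i, σs i ω = 0} := by
    have : {ω | ∃ i, σs i ω = 0} = ⋃ i, σs i ⁻¹' {0} := by ext ω; simp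
    rw [this]
    exact MeasurableSet.iUnion fun i => hσ i (measurableSet_singleton 0)
  have h3 : MeasurableSet {ω | ∃ i, σs i ω = (n:ℝ)} := by
    have : {ω | ∃ i, σs i ω = (n:ℝ)} = ⋃ i, σs i ⁻¹' {(n:ℝ)} := by ext ω; simp
    rw [this]
    exact MeasurableSet.iUnion fun i => hσ i (measurableSet_singleton _)
  exact h1.inter (h2.inter h3)

include M in
lemma P_GoodSet_compl (hn : 2 ≤ n) : P ((GoodSet σs n)ᶜ) = 0 := by
  have hn1 : 1 ≤ n := le_trans one_le_two hn
  have h1 : P {ω | ¬ ∀ i, σs i ω = 0 ∨ σs i ω = (n:ℝ)} = 0 := by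
    have hsub : {ω | ¬ ∀ i, σs i ω = 0 ∨ σs i ω = (n:ℝ)}
        ⊆ ⋃ i, σs i ⁻¹' ({0, (n:ℝ)}ᶜ) := by
      intro ω hω
      simp only [mem_setOf_eq, not_forall] at hω
      obtain ⟨i, hi⟩ := hω
      refine mem_iUnion.mpr ⟨i, ?_⟩
      simp only [mem_preimage, mem_compl_iff, mem_insert_iff, mem_singleton_iff]
      tauto
    refine measure_mono_null hsub (measure_iUnion_null fun i => ?_)
    rw [P_σ_preimage M hn1 i ((measurableSet_singleton (n:ℝ)).insert 0).compl]
    exact segSeed_pair_compl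
  have h2 : P {ω | ∀ i, σs i ω ≠ 0} = 0 :=
    P_all_ne_zero M hn1 (segSeed_compl_zero_lt_one hn)
  have h3 : P {ω | ∀ i, σs i ω ≠ (n:ℝ)} = 0 :=
    P_all_ne_zero M hn1 (segSeed_compl_n_lt_one hn1)
  have hsub : (GoodSet σs n)ᶜ ⊆ {ω | ¬ ∀ i, σs i ω = 0 ∨ σs i ω = (n:ℝ)}
      ∪ ({ω | ∀ i, σs i ω ≠ 0} ∪ {ω | ∀ i, σs i ω ≠ (n:ℝ)}) := by
    intro ω hω
    simp only [GoodSet, mem_compl_iff, mem_setOf_eq, not_and_or] at hω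
    simp only [mem_union, mem_setOf_eq]
    rcases hω with h | h | h
    · exact Or.inl h
    · exact Or.inr (Or.inl (by push_neg at h; exact h))
    · exact Or.inr (Or.inr (by push_neg at h; exact h))
  refine measure_mono_null hsub ?_
  refine measure_union_null h1 (measure_union_null h2 h3)

include M in
lemma meas_CmF : Measurable (fun ω =>
    min (hitTime τs σs 0 ω + (n:ℝ))
      (min (hitTime τs σs (n:ℝ) ω + (n:ℝ))
        (max (hitTime τs σs 0 ω) (max (hitTime τs σs (n:ℝ) ω)
          ((hitTime τs σs 0 ω + hitTime τs σs (n:ℝ) ω + (n:ℝ)) / 2))))) := by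
  have h0 := meas_hitTime M.meas_τ M.meas_σ 0
  have hn' := meas_hitTime M.meas_τ M.meas_σ (n:ℝ)
  exact (h0.add_const _).min ((hn'.add_const _).min
    (h0.max (hn'.max (((h0.add hn').add_const _).div_const _))))

include M in
lemma main_bound (hn : 2 ≤ n) {δ ε' : ℝ} (hδ0 : 0 < δ) (hδ1 : δ ≤ 1) (hε' : 0 ≤ ε')
    (f : BoundedContinuousFunction ℝ ℝ)
    (hf : ∀ x ∈ Icc (-1:ℝ) 3, ∀ y ∈ Icc (-1:ℝ) 3, |x - y| ≤ δ → |f x - f y| ≤ ε') :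
    |(∫ ω, f (segmentCoverTime n τs σs ω / n) ∂P)
        - ∫ x, f (min 1 ((1 + x) / 2)) ∂(expMeasure 1)|
      ≤ ε' + 2 * ‖f‖ * (((n:ℝ≥0∞)⁻¹ * (n:ℝ≥0∞)⁻¹
          + (ENNReal.ofReal (Real.exp (-(δ * n / 2)))
            + ENNReal.ofReal (Real.exp (-(δ * n / 2))))).toReal) := by
  have hn1 : 1 ≤ n := le_trans one_le_two hn
  have hnpos : (0:ℝ) < n := by
    have : (1:ℝ) ≤ n := by exact_mod_cast hn1
    linarith
  set nr : ℝ := (n:ℝ) with hnr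
  set T0 : Ω → ℝ := hitTime τs σs 0 with hT0
  set TN : Ω → ℝ := hitTime τs σs nr with hTN
  set CmF : Ω → ℝ := fun ω => min (T0 ω + nr) (min (TN ω + nr)
      (max (T0 ω) (max (TN ω) ((T0 ω + TN ω + nr) / 2)))) with hCmF
  have hCmFmeas : Measurable CmF := meas_CmF M
  have hT0meas : Measurable T0 := meas_hitTime M.meas_τ M.meas_σ 0
  have hTNmeas : Measurable TN := meas_hitTime M.meas_τ M.meas_σ nr
  set g1 : Ω → ℝ := fun ω => f (CmF ω / nr) with hg1
  set g2 : Ω → ℝ := fun ω => f (min 1 ((1 + TN ω / nr) / 2)) with hg2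
  have hg1meas : Measurable g1 := f.continuous.measurable.comp (hCmFmeas.div_const _)
  have hg2meas : Measurable g2 := f.continuous.measurable.comp
    (measurable_const.min ((measurable_const.add (hTNmeas.div_const _)).div_const _))
  have hIg1 : Integrable g1 P := by
    refine ⟨hg1meas.aestronglyMeasurable, ?_⟩
    refine HasFiniteIntegral.of_bounded (C := ‖f‖) (ae_of_all _ fun ω => ?_)
    exact f.norm_coe_le_norm _
  have hIg2 : Integrable g2 P := by
    refine ⟨hg2meas.aestronglyMeasurable, ?_⟩
    refine HasFiniteIntegral.of_bounded (C := ‖f‖) (ae_of_all _ fun ω => ?_)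
    exact f.norm_coe_le_norm _
  have hae : ∀ᵐ ω ∂P, segmentCoverTime n τs σs ω = CmF ω := by
    rw [ae_iff]
    refine measure_mono_null ?_ (P_GoodSet_compl M hn)
    intro ω hω hg
    exact hω (coverTime_eq M hg.1 hg.2.1 hg.2.2)
  have hint1 : ∫ ω, f (segmentCoverTime n τs σs ω / n) ∂P = ∫ ω, g1 ω ∂P := by
    refine integral_congr_ae (hae.mono fun ω h => ?_)
    rw [hg1]
    simp only
    rw [h]
  have hφcont : Continuous fun x : ℝ => f (min 1 ((1 + x) / 2)) :=
    f.continuous.comp (continuous_const.min ((continuous_const.add continuous_id).div_const _))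
  have hint2 : ∫ ω, g2 ω ∂P = ∫ x, f (min 1 ((1 + x) / 2)) ∂(expMeasure 1) := by
    rw [← law_TN M hn,
      integral_map (hTNmeas.div_const _).aemeasurable hφcont.aestronglyMeasurable]
  rw [hint1, ← hint2, ← integral_sub hIg1 hIg2]
  have habs_le : |∫ ω, (g1 ω - g2 ω) ∂P| ≤ ∫ ω, |g1 ω - g2 ω| ∂P := by
    simpa [Real.norm_eq_abs] using
      norm_integral_le_integral_norm (f := fun ω => g1 ω - g2 ω) (μ := P)
  refine le_trans habs_le ?_
  set S : Set Ω := GoodSet σs n ∩ {ω | T0 ω ≤ δ * nr} with hS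
  have hSmeas : MeasurableSet S :=
    (meas_GoodSet M.meas_σ).inter (hT0meas measurableSet_Iic)
  have hIabs : Integrable (fun ω => |g1 ω - g2 ω|) P := (hIg1.sub hIg2).abs
  rw [← integral_add_compl hSmeas hIabs]
  refine add_le_add ?_ ?_
  · -- on S: uniform continuity bound
    have hpt : ∀ ω ∈ S, |g1 ω - g2 ω| ≤ ε' := by
      rintro ω ⟨hgood, hT0δ⟩
      simp only [mem_setOf_eq] at hT0δ
      have hapos : 0 < T0 ω := τ_pos M _ ω
      have hbpos : 0 < TN ω := τ_pos M _ ω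
      have hcb := cstar_bounds hapos hbpos (le_of_lt hnpos)
      have hbdiv : 0 ≤ TN ω / nr := le_of_lt (div_pos hbpos hnpos)
      have hM : min nr ((nr + TN ω)/2) / nr = min 1 ((1 + TN ω / nr) / 2) := by
        rcases le_total nr ((nr + TN ω)/2) with h | h
        · rw [min_eq_left h, div_self hnpos.ne', min_eq_left]
          have h2 : nr ≤ TN ω := by linarith
          have h3 : (1:ℝ) ≤ TN ω / nr := (le_div_iff₀ hnpos).mpr (by linarith)
          linarith
        · rw [min_eq_right h, min_eq_right]
          · have hrw : (1 + TN ω / nr) = (nr + TN ω)/nr := by field_simp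
            rw [hrw, div_div, div_div, mul_comm]
          · have h2 : TN ω ≤ nr := by linarith
            have h3 : TN ω / nr ≤ 1 := (div_le_one hnpos).mpr h2
            linarith
      have h1 : min nr ((nr + TN ω)/2) / nr ≤ CmF ω / nr := by
        gcongr
        exact hcb.1
      have h2 : CmF ω / nr ≤ (min nr ((nr + TN ω)/2) + T0 ω) / nr := by
        gcongr
        exact hcb.2
      rw [hM] at h1
      rw [add_div, hM] at h2
      have hδ' : T0 ω / nr ≤ δ := by
        rw [div_le_iff₀ hnpos]
        linarith [hT0δ]
      have hx2le : min 1 ((1 + TN ω / nr) / 2) ≤ 1 := min_le_left _ _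
      have hx2ge : (-1:ℝ) ≤ min 1 ((1 + TN ω / nr) / 2) := by
        refine le_min (by norm_num) (by linarith)
      have hx1mem : CmF ω / nr ∈ Icc (-1:ℝ) 3 := by
        constructor
        · linarith
        · have : T0 ω / nr ≤ 1 := le_trans hδ' hδ1
          linarith
      have hx2mem : min 1 ((1 + TN ω / nr) / 2) ∈ Icc (-1:ℝ) 3 := ⟨hx2ge, by linarith⟩
      have habs : |CmF ω / nr - min 1 ((1 + TN ω / nr) / 2)| ≤ δ := by
        rw [abs_le]
        constructor
        · linarith
        · linarith
      exact hf _ hx1mem _ hx2mem habs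
    calc ∫ ω in S, |g1 ω - g2 ω| ∂P ≤ ∫ _ω in S, ε' ∂P := by
          refine setIntegral_mono_on hIabs.integrableOn
            (integrableOn_const (measure_ne_top _ _)) hSmeas hpt
      _ = (P S).toReal • ε' := setIntegral_const ε'
      _ ≤ 1 * ε' := by
          rw [smul_eq_mul]
          refine mul_le_mul_of_nonneg_right ?_ hε'
          refine ENNReal.toReal_le_of_le_ofReal one_pos.le ?_
          simpa using prob_le_one
      _ = ε' := one_mul ε'
  · -- off S
    have hfin : ((n:ℝ≥0∞)⁻¹ * (n:ℝ≥0∞)⁻¹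
        + (ENNReal.ofReal (Real.exp (-(δ * n / 2)))
          + ENNReal.ofReal (Real.exp (-(δ * n / 2))))) ≠ ⊤ := by
      refine ENNReal.add_ne_top.mpr ⟨?_, ?_⟩
      · have hne : ((n:ℝ≥0∞)) ≠ 0 := by
          simp only [ne_eq, Nat.cast_eq_zero]
          omega
        exact ENNReal.mul_ne_top (ENNReal.inv_ne_top.mpr hne) (ENNReal.inv_ne_top.mpr hne)
      · exact ENNReal.add_ne_top.mpr ⟨ENNReal.ofReal_ne_top, ENNReal.ofReal_ne_top⟩
    have hPSc : P Sᶜ ≤ ((n:ℝ≥0∞)⁻¹ * (n:ℝ≥0∞)⁻¹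
        + (ENNReal.ofReal (Real.exp (-(δ * n / 2)))
          + ENNReal.ofReal (Real.exp (-(δ * n / 2))))) := by
      have hsub : Sᶜ ⊆ (GoodSet σs n)ᶜ
          ∪ ({ω | ∀ i, σs i ω = 0 ∨ σs i ω = nr} ∩ {ω | δ * nr < hitTime τs σs 0 ω}) := by
        intro ω hω
        rw [hS, compl_inter] at hω
        rcases hω with h | h
        · exact Or.inl h
        · simp only [mem_compl_iff, mem_setOf_eq, not_le] at h
          by_cases hg : ω ∈ GoodSet σs n
          · exact Or.inr ⟨hg.1, h⟩
          · exact Or.inl hg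
      refine (measure_mono hsub).trans ?_
      refine (measure_union_le _ _).trans ?_
      rw [P_GoodSet_compl M hn, zero_add]
      exact P_T0_bad M hn (u := δ * nr) (by positivity)
    calc ∫ ω in Sᶜ, |g1 ω - g2 ω| ∂P ≤ ∫ _ω in Sᶜ, 2 * ‖f‖ ∂P := by
          refine setIntegral_mono_on hIabs.integrableOn
            (integrableOn_const (measure_ne_top _ _)) hSmeas.compl ?_
          intro ω _
          calc |g1 ω - g2 ω| ≤ |g1 ω| + |g2 ω| := abs_sub _ _
            _ ≤ ‖f‖ + ‖f‖ := add_le_add (f.norm_coe_le_norm _) (f.norm_coe_le_norm _)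
            _ = 2 * ‖f‖ := by ring
      _ = (P Sᶜ).toReal • (2 * ‖f‖) := setIntegral_const _
      _ ≤ _ := by
          rw [smul_eq_mul, mul_comm]
          refine mul_le_mul_of_nonneg_left ?_ (by positivity)
          exact ENNReal.toReal_mono hfin hPSc

end Model

end SegGrowth

open SegGrowth in
/-- Example: for the standardized growth model on the segment `[0,n]` with seed
distribution `(1 − 1/n) δ₀ + (1/n) δₙ`, the rescaled cover time `C⁽ⁿ⁾/n` converges in
distribution as `n → ∞` to `min (1, (1+ξ)/2)` with `ξ ~ Exponential(1)`. -/
theorem segment_growth_model_limit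
    (Ω : ℕ → Type*) [∀ n, MeasurableSpace (Ω n)]
    (P : ∀ n, Measure (Ω n)) [∀ n, IsProbabilityMeasure (P n)]
    (τ : ∀ n, ℕ → Ω n → ℝ) (σs : ∀ n, ℕ → Ω n → ℝ)
    (hmodel : ∀ n, 1 ≤ n → IsGrowthModel (P n) (segSeedMeasure n) (τ n) (σs n)) :
    ∀ f : BoundedContinuousFunction ℝ ℝ,
      Filter.Tendsto
        (fun n => ∫ ω, f (segmentCoverTime n (τ n) (σs n) ω / n) ∂(P n))
        Filter.atTop
        (nhds (∫ x, f (min 1 ((1 + x) / 2)) ∂(expMeasure 1))) := by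
  intro f
  rw [Metric.tendsto_atTop]
  intro ε hε
  obtain ⟨δ₀, hδ₀pos, hδ₀⟩ : ∃ δ₀ > 0, ∀ x ∈ Icc (-1:ℝ) 3, ∀ y ∈ Icc (-1:ℝ) 3,
      |x - y| ≤ δ₀ → |f x - f y| ≤ ε/4 := by
    have hcomp : IsCompact (Icc (-1:ℝ) 3) := isCompact_Icc
    have huc := hcomp.uniformContinuousOn_of_continuous f.continuous.continuousOn
    rw [Metric.uniformContinuousOn_iff] at huc
    obtain ⟨δ₁, hδ₁, h⟩ := huc (ε/4) (by positivity)
    refine ⟨δ₁/2, by positivity, fun x hx y hy hxy => ?_⟩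
    have hlt := h x hx y hy (by rw [Real.dist_eq]; linarith)
    rw [Real.dist_eq] at hlt
    linarith
  set δ := min δ₀ 1 with hδdef
  have hδpos : 0 < δ := lt_min hδ₀pos one_pos
  have hδ1 : δ ≤ 1 := min_le_right _ _
  have hδle : δ ≤ δ₀ := min_le_left _ _
  set r : ℕ → ℝ := fun n => (n:ℝ)⁻¹ * (n:ℝ)⁻¹
      + (Real.exp (-(δ * n / 2)) + Real.exp (-(δ * n / 2))) with hr
  have hrtend : Filter.Tendsto r Filter.atTop (nhds 0) := by
    have h1 : Filter.Tendsto (fun n : ℕ => (n:ℝ)⁻¹) Filter.atTop (nhds 0) :=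
      tendsto_inv_atTop_zero.comp tendsto_natCast_atTop_atTop
    have h2 : Filter.Tendsto (fun n : ℕ => Real.exp (-(δ * n / 2))) Filter.atTop (nhds 0) := by
      apply Real.tendsto_exp_atBot.comp
      have hmt : Filter.Tendsto (fun n : ℕ => δ * n / 2) Filter.atTop Filter.atTop := by
        apply Filter.Tendsto.atTop_div_const two_pos
        exact Filter.Tendsto.const_mul_atTop hδpos tendsto_natCast_atTop_atTop
      exact Filter.tendsto_neg_atTop_atBot.comp hmt
    have := (h1.mul h1).add (h2.add h2)
    simpa using this
  have hmain : Filter.Tendsto (fun n => 2 * ‖f‖ * r n) Filter.atTop (nhds 0) := by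
    have := hrtend.const_mul (2 * ‖f‖)
    simpa using this
  have hev : ∀ᶠ n in Filter.atTop, 2 * ‖f‖ * r n < ε/2 :=
    hmain.eventually_lt_const (by positivity)
  obtain ⟨n0, hn0⟩ := Filter.eventually_atTop.mp hev
  refine ⟨max n0 2, fun n hn => ?_⟩
  have hn2 : 2 ≤ n := le_trans (le_max_right n0 2) hn
  have hnn0 : n0 ≤ n := le_trans (le_max_left n0 2) hn
  have M := hmodel n (le_trans one_le_two hn2)
  have hb := main_bound M hn2 hδpos hδ1 (by positivity : (0:ℝ) ≤ ε/4) f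
    (fun x hx y hy hxy => hδ₀ x hx y hy (le_trans hxy hδle))
  have htR : (((n:ℝ≥0∞))⁻¹ * ((n:ℝ≥0∞))⁻¹
      + (ENNReal.ofReal (Real.exp (-(δ * n / 2)))
        + ENNReal.ofReal (Real.exp (-(δ * n / 2))))).toReal = r n := by
    have hne : ((n:ℝ≥0∞)) ≠ 0 := by
      simp only [ne_eq, Nat.cast_eq_zero]
      omega
    have hne1 : ((n:ℝ≥0∞))⁻¹ * ((n:ℝ≥0∞))⁻¹ ≠ ⊤ :=
      ENNReal.mul_ne_top (ENNReal.inv_ne_top.mpr hne) (ENNReal.inv_ne_top.mpr hne)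
    rw [ENNReal.toReal_add hne1
      (ENNReal.add_ne_top.mpr ⟨ENNReal.ofReal_ne_top, ENNReal.ofReal_ne_top⟩),
      ENNReal.toReal_mul,
      ENNReal.toReal_add ENNReal.ofReal_ne_top ENNReal.ofReal_ne_top,
      ENNReal.toReal_ofReal (Real.exp_nonneg _), ENNReal.toReal_inv, ENNReal.toReal_natCast]
  rw [htR] at hb
  rw [Real.dist_eq]
  have h2f : 2 * ‖f‖ * r n < ε/2 := hn0 n hnn0
  calc |(∫ ω, f (segmentCoverTime n (τ n) (σs n) ω / n) ∂(P n))
        - ∫ x, f (min 1 ((1 + x) / 2)) ∂(expMeasure 1)|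
      ≤ ε/4 + 2 * ‖f‖ * r n := hb
    _ < ε/4 + ε/2 := by linarith
    _ < ε := by linarith

end AuxSegGrowth

end
end
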